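/- arXiv:math/0609219 — 2 statements merged into one kernel-verified Lean document; each statement's English description precedes it below -/
import Mathlib

section
/- Let G and F be graphs with the same edge set and the same set of circuits (edge sets of cycles). If G is 3-connected and F has no isolated vertices, then there is an isomorphism from G to F inducing the identity map on edges. -/
open SimpleGraph

universe u v

variable {V : Type u} {W : Type v}

/-- Degree of a vertex, via the cardinality of its neighbor set. -/
noncomputable def ndeg (G : SimpleGraph V) (x : V) : ℕ := (G.neighborSet x).ncard

/-- A graph is 3-connected: at least 4 vertices, and deleting any set of at most
two vertices leaves a connected graph. -/
def ThreeConnected (G : SimpleGraph V) : Prop :=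
  4 ≤ Nat.card V ∧ ∀ s : Set V, s.ncard ≤ 2 → (G.induce sᶜ).Connected

/-- A subgraph is a cycle: connected and every vertex has exactly two neighbours. -/
def IsCycleSub {G : SimpleGraph V} (C : G.Subgraph) : Prop :=
  C.Connected ∧ ∀ v ∈ C.verts, (C.neighborSet v).ncard = 2

/-- Contraction of a set of edges: vertices are the connected components of the
graph spanned by those edges; adjacency is induced from `G`. -/
def contractSG (G : SimpleGraph V) (E' : Set (Sym2 V)) :
    SimpleGraph (SimpleGraph.ConnectedComponent (SimpleGraph.fromEdgeSet E')) where
  Adj c d := c ≠ d ∧ ∃ a b : V, G.Adj a b ∧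
      (SimpleGraph.fromEdgeSet E').connectedComponentMk a = c ∧
      (SimpleGraph.fromEdgeSet E').connectedComponentMk b = d
  symm := ⟨by
    rintro c d ⟨hne, a, b, hab, ha, hb⟩
    exact ⟨hne.symm, b, a, hab.symm, hb, ha⟩⟩
  loopless := ⟨by rintro c ⟨hne, -⟩; exact hne rfl⟩

/-- A candidate block set: nonempty, induces a connected subgraph with no cutvertex. -/
def GoodBlockSet (H : SimpleGraph W) (S : Set W) : Prop :=
  S.Nonempty ∧ (H.induce S).Connected ∧ ∀ v : W, (H.induce (S \ {v})).Preconnected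

/-- A block of a graph, as a vertex set: a maximal `GoodBlockSet`. -/
def IsBlockSet (H : SimpleGraph W) (S : Set W) : Prop :=
  GoodBlockSet H S ∧ ∀ S', S ⊆ S' → GoodBlockSet H S' → S' = S

/-- The number of blocks of a graph. -/
noncomputable def numBlocks (H : SimpleGraph W) : ℕ := {S | IsBlockSet H S}.ncard

/-- The set of circuits (edge sets of cycles) of `G`. -/
def circuits (G : SimpleGraph V) : Set (Set (Sym2 V)) :=
  {X | ∃ C : G.Subgraph, IsCycleSub C ∧ X = C.edgeSet}

/-- The set of non-separating circuits of `G`: edge sets of cycles whose contraction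
does not increase the number of blocks. -/
def nsCircuits (G : SimpleGraph V) : Set (Set (Sym2 V)) :=
  {X | ∃ C : G.Subgraph, IsCycleSub C ∧
      numBlocks (contractSG G C.edgeSet) ≤ numBlocks G ∧ X = C.edgeSet}

/-- The GF(2)-span (closure under symmetric difference) of a family of sets. -/
inductive SDSpan {α : Type u} (S : Set (Set α)) : Set α → Prop
  | empty : SDSpan S ∅
  | step (X Y : Set α) : SDSpan S X → Y ∈ S → SDSpan S (symmDiff X Y)

/-- A thread: a nontrivial path whose internal vertices have degree 2 and whose
end-vertices have degree different from 2. -/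
def IsThread {G : SimpleGraph V} {x y : V} (T : G.Walk x y) : Prop :=
  T.IsPath ∧ 0 < T.length ∧
    (∀ v ∈ T.support, v ≠ x → v ≠ y → ndeg G v = 2) ∧
    ndeg G x ≠ 2 ∧ ndeg G y ≠ 2

/-- The internal vertices of a walk. -/
def threadInternal {G : SimpleGraph V} {x y : V} (T : G.Walk x y) : Set V :=
  {v | v ∈ T.support ∧ v ≠ x ∧ v ≠ y}

/-- `G` is a subdivision of `H`: there is an embedding of the vertices of `H` into
`G` and a system of internally disjoint paths in `G`, one for each edge of `H`,
covering `G` exactly. -/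
def IsSubdivisionOf {V : Type u} {W : Type v} (G : SimpleGraph V) (H : SimpleGraph W) : Prop :=
  ∃ f : W ↪ V, ∃ P : ∀ ⦃a b : W⦄, H.Adj a b → G.Walk (f a) (f b),
    (∀ a b (h : H.Adj a b), (P h).IsPath ∧ 0 < (P h).length) ∧
    (∀ a b (h : H.Adj a b), P h.symm = (P h).reverse) ∧
    (∀ a b (h : H.Adj a b) (v : V), v ∈ (P h).support → v ≠ f a → v ≠ f b →
        v ∉ Set.range f) ∧
    (∀ a b a' b' (h : H.Adj a b) (h' : H.Adj a' b'), s(a, b) ≠ s(a', b') →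
        ∀ v : V, v ∈ (P h).support → v ∈ (P h').support → v ∈ Set.range f) ∧
    (∀ v : V, v ∈ Set.range f ∨ ∃ (a b : W) (h : H.Adj a b), v ∈ (P h).support) ∧
    (∀ e : Sym2 V, e ∈ G.edgeSet ↔ ∃ (a b : W) (h : H.Adj a b), e ∈ (P h).edges)

/-- `G` is topologically 3-connected: a subdivision of some 3-connected graph. -/
def TopThreeConnected {V : Type u} (G : SimpleGraph V) : Prop :=
  ∃ W : Type u, ∃ H : SimpleGraph W, ThreeConnected H ∧ IsSubdivisionOf G H

/-- Restriction of a subgraph of `G` with vertices inside `S` to a subgraph of the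
induced graph `G.induce S`. -/
def restrictSub (G : SimpleGraph V) (S : Set V) (C : G.Subgraph) (hC : C.verts ⊆ S) :
    (G.induce S).Subgraph where
  verts := Subtype.val ⁻¹' C.verts
  Adj a b := C.Adj a b
  adj_sub := fun h => C.adj_sub h
  edge_vert := fun h => C.edge_vert h
  symm := ⟨fun a b h => C.symm.symm _ _ h⟩

/-- A labelled graph: abstract edge type `E` with an incidence function into
unordered pairs of vertices, no loops and no parallel edges. -/
structure LGraph (V : Type u) (E : Type v) where
  inc : E → Sym2 V
  not_diag : ∀ e, ¬ (inc e).IsDiag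
  inj : Function.Injective inc

/-- The underlying simple graph of a labelled graph. -/
def LGraph.toSG {V : Type u} {E : Type v} (G : LGraph V E) : SimpleGraph V :=
  SimpleGraph.fromEdgeSet (Set.range G.inc)

/-- The circuits (edge-label sets of cycles) of a labelled graph. -/
def LGraph.circuits {V : Type u} {E : Type v} (G : LGraph V E) : Set (Set E) :=
  {X | ∃ C : G.toSG.Subgraph, IsCycleSub C ∧ C.edgeSet = G.inc '' X}

/-- The non-separating circuits of a labelled graph. -/
def LGraph.nsCircuits {V : Type u} {E : Type v} (G : LGraph V E) : Set (Set E) :=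
  {X | ∃ C : G.toSG.Subgraph, IsCycleSub C ∧
      numBlocks (contractSG G.toSG C.edgeSet) ≤ numBlocks G.toSG ∧ C.edgeSet = G.inc '' X}

section part3
open scoped Classical

lemma sym2_exists_pair {α : Type*} (z : Sym2 α) : ∃ x y, z = s(x, y) :=
  Sym2.ind (fun x y => ⟨x, y, rfl⟩) z

variable {V₁ E : Type u} (L : LGraph V₁ E)

/-- the set of edge labels incident to a vertex -/
def estar (L : LGraph V₁ E) (x : V₁) : Set E := {e | x ∈ L.inc e}

lemma LGraph.edgeSet_toSG : L.toSG.edgeSet = Set.range L.inc := by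
  rw [LGraph.toSG, edgeSet_fromEdgeSet]
  ext e
  simp only [Set.mem_diff, Set.mem_setOf_eq, and_iff_left_iff_imp]
  rintro ⟨x, rfl⟩
  exact L.not_diag x

lemma ncard_preimage_inc {A : Set (Sym2 V₁)} (hA : A ⊆ Set.range L.inc) :
    (L.inc ⁻¹' A).ncard = A.ncard := by
  conv_rhs => rw [← Set.image_preimage_eq_of_subset hA]
  rw [Set.ncard_image_of_injective _ L.inj]

lemma mem_inc_of_mem_star {x : V₁} {e : E} (h : e ∈ estar L x) : x ∈ L.inc e := h

lemma subgraph_edgeSet_subset_range (C : L.toSG.Subgraph) :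
    C.edgeSet ⊆ Set.range L.inc := by
  rw [← L.edgeSet_toSG]; exact C.edgeSet_subset

lemma edges_at_eq_image (C : L.toSG.Subgraph) (x : V₁) :
    {e' | e' ∈ C.edgeSet ∧ x ∈ e'} = (fun w => s(x, w)) '' C.neighborSet x := by
  classical
  ext e'
  constructor
  · rintro ⟨he', hx⟩
    refine ⟨Sym2.Mem.other' hx, ?_, Sym2.other_spec' hx⟩
    have hsp := Sym2.other_spec' hx
    rw [← hsp] at he'
    exact Subgraph.mem_edgeSet.mp he'
  · rintro ⟨w, hw, rfl⟩
    exact ⟨Subgraph.mem_edgeSet.mpr hw, Sym2.mem_iff.mpr (Or.inl rfl)⟩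

lemma circuit_inter_star {C : L.toSG.Subgraph} (hC : IsCycleSub C) (x : V₁) :
    ((L.inc ⁻¹' C.edgeSet) ∩ estar L x).ncard = if x ∈ C.verts then 2 else 0 := by
  have hpre : (L.inc ⁻¹' C.edgeSet) ∩ estar L x
      = L.inc ⁻¹' {e' | e' ∈ C.edgeSet ∧ x ∈ e'} := by
    ext e; simp [estar, Set.mem_preimage, Set.mem_inter_iff, Set.mem_setOf_eq]
  rw [hpre, ncard_preimage_inc L (fun e' he' => subgraph_edgeSet_subset_range L C he'.1),
    edges_at_eq_image, Set.ncard_image_of_injOn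
      (fun a _ b _ hab => Sym2.congr_right.mp hab)]
  split_ifs with hx
  · exact hC.2 x hx
  · have : C.neighborSet x = ∅ := by
      ext w
      simp only [Subgraph.mem_neighborSet, Set.mem_empty_iff_false, iff_false]
      exact fun h => hx (C.edge_vert h)
    rw [this, Set.ncard_empty]

lemma star_eq_preimage (x : V₁) :
    estar L x = L.inc ⁻¹' {e' | e' ∈ L.toSG.edgeSet ∧ x ∈ e'} := by
  ext e
  simp only [estar, Set.mem_setOf_eq, Set.mem_preimage]
  refine ⟨fun h => ⟨?_, h⟩, fun h => h.2⟩
  rw [L.edgeSet_toSG]; exact ⟨e, rfl⟩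

lemma graph_edges_at_eq_image (x : V₁) :
    {e' | e' ∈ L.toSG.edgeSet ∧ x ∈ e'} = (fun w => s(x, w)) '' L.toSG.neighborSet x := by
  classical
  ext e'
  constructor
  · rintro ⟨he', hx⟩
    refine ⟨Sym2.Mem.other' hx, ?_, Sym2.other_spec' hx⟩
    have hsp := Sym2.other_spec' hx
    rw [← hsp] at he'
    exact he'
  · rintro ⟨w, hw, rfl⟩
    exact ⟨hw, Sym2.mem_iff.mpr (Or.inl rfl)⟩

lemma ncard_estar (x : V₁) : (estar L x).ncard = (L.toSG.neighborSet x).ncard := by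
  rw [star_eq_preimage, ncard_preimage_inc L
    (fun e' he' => by rw [← L.edgeSet_toSG]; exact he'.1), graph_edges_at_eq_image,
    Set.ncard_image_of_injOn (fun a _ b _ hab => Sym2.congr_right.mp hab)]

lemma star_even (x : V₁) : ∀ X ∈ L.circuits, Even ((X ∩ estar L x).ncard) := by
  rintro X ⟨C, hC, hX⟩
  have hXeq : L.inc ⁻¹' C.edgeSet = X := by
    rw [hX, Set.preimage_image_eq _ L.inj]
  rw [← hXeq, circuit_inter_star L hC]
  split_ifs
  · exact ⟨1, rfl⟩
  · exact ⟨0, rfl⟩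

end part3
section part1
variable {V : Type u} {G : SimpleGraph V} {u v : V}
variable {V : Type u} {G : SimpleGraph V} {u v : V}

lemma sym2_eq_pair_of_ne_mem {α : Type*} {x y : α} {z : Sym2 α} (hxy : x ≠ y)
    (hx : x ∈ z) (hy : y ∈ z) : z = s(x, y) := by
  induction z with
  | _ p q =>
    rw [Sym2.mem_iff] at hx hy
    obtain rfl | rfl := hx <;> obtain rfl | rfl := hy
    · exact absurd rfl hxy
    · rfl
    · exact Sym2.eq_swap
    · exact absurd rfl hxy

lemma neighborSet_toSubgraph_eq_empty {p : G.Walk u v} {x : V} (hx : x ∉ p.support) :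
    p.toSubgraph.neighborSet x = ∅ := by
  ext y
  simp only [Subgraph.mem_neighborSet, Set.mem_empty_iff_false, iff_false]
  intro h
  exact hx (p.mem_verts_toSubgraph.mp (p.toSubgraph.edge_vert h))

lemma path_start_neighborSet (p : G.Walk u v) (hp : p.IsPath) (hn : ¬ p.Nil) :
    ∃ y, p.toSubgraph.neighborSet u = {y} ∧ s(u, y) ∈ p.edges := by
  cases p with
  | nil => exact absurd Walk.nil_nil hn
  | @cons _ b _ h q =>
    obtain ⟨hq, hu⟩ := (Walk.cons_isPath_iff h q).mp hp
    refine ⟨b, ?_, by simp⟩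
    ext z
    simp [Walk.toSubgraph, Subgraph.neighborSet_sup, neighborSet_subgraphOfAdj, h.ne,
      neighborSet_toSubgraph_eq_empty hu]

lemma path_end_neighborSet (p : G.Walk u v) (hp : p.IsPath) (hn : ¬ p.Nil) :
    ∃ y, p.toSubgraph.neighborSet v = {y} ∧ s(y, v) ∈ p.edges := by
  have hn' : ¬ p.reverse.Nil := by
    simp only [Walk.nil_iff_length_eq, Walk.length_reverse] at hn ⊢; exact hn
  obtain ⟨y, hy, hye⟩ := path_start_neighborSet p.reverse hp.reverse hn'
  refine ⟨y, by rwa [Walk.toSubgraph_reverse] at hy, ?_⟩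
  rw [Walk.edges_reverse] at hye
  rw [Sym2.eq_swap]
  exact List.mem_reverse.mp hye

lemma cycle_ncard_neighborSet_base {c : G.Walk u u} (hc : c.IsCycle) :
    (c.toSubgraph.neighborSet u).ncard = 2 := by
  cases c with
  | nil => exact absurd rfl hc.ne_nil
  | @cons _ b _ h q =>
    obtain ⟨hq, he⟩ := (Walk.cons_isCycle_iff q h).mp hc
    have hnil : ¬ q.Nil := by
      intro hn
      cases q with
      | nil => exact G.loopless.irrefl u h
      | cons _ _ => exact Walk.not_nil_cons hn
    obtain ⟨y, hy, hyedge⟩ := path_end_neighborSet q hq hnil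
    have hyb : y ≠ b := by
      intro hyb
      exact he (by rw [Sym2.eq_swap]; exact hyb ▸ hyedge)
    have hset : (Walk.cons h q).toSubgraph.neighborSet u = {b, y} := by
      ext z
      simp only [Walk.toSubgraph, Subgraph.neighborSet_sup, neighborSet_subgraphOfAdj,
        Set.mem_union, Set.mem_insert_iff, Set.mem_singleton_iff, hy]
      by_cases hub : u = b
      · exact absurd hub h.ne
      · simp [h.ne, hub, if_neg (Ne.symm h.ne)]
    rw [hset, Set.ncard_pair (Ne.symm hyb)]

lemma isCycleSub_toSubgraph {c : G.Walk u u} (hc : c.IsCycle) : IsCycleSub c.toSubgraph := by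
  classical
  refine ⟨c.toSubgraph_connected, fun x hx => ?_⟩
  rw [Walk.mem_verts_toSubgraph] at hx
  rw [← c.toSubgraph_rotate hx]
  exact cycle_ncard_neighborSet_base (hc.rotate hx)

end part1

section part2
variable {W : Type v} {H : SimpleGraph W} (D' : Set (Sym2 W))

open Classical in
noncomputable def dct {a b : W} (p : H.Walk a b) : ℕ :=
  p.edges.countP (fun e => decide (e ∈ D'))

open Classical in
lemma dct_nil {a : W} : dct D' (Walk.nil : H.Walk a a) = 0 := rfl

open Classical in
lemma dct_cons {a b c : W} (h : H.Adj a b) (p : H.Walk b c) :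
    dct D' (Walk.cons h p) = (if s(a, b) ∈ D' then 1 else 0) + dct D' p := by
  simp only [dct, Walk.edges_cons, List.countP_cons, decide_eq_true_eq]
  rw [add_comm]

open Classical in
lemma dct_append {a b c : W} (p : H.Walk a b) (q : H.Walk b c) :
    dct D' (p.append q) = dct D' p + dct D' q := by
  simp [dct, Walk.edges_append, List.countP_append]

open Classical in
lemma dct_reverse {a b : W} (p : H.Walk a b) : dct D' p.reverse = dct D' p := by
  simp only [dct, Walk.edges_reverse]
  exact List.reverse_perm _ |>.countP_eq _

open Classical in
lemma dct_copy {a b a' b' : W} (p : H.Walk a b) (h1 : a = a') (h2 : b = b') :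
    dct D' (p.copy h1 h2) = dct D' p := by
  subst h1; subst h2; rfl

lemma even_dct_closed
    (hcyc : ∀ (x : W) (c : H.Walk x x), c.IsCycle → Even (dct D' c)) :
    ∀ (n : ℕ) (x : W) (w : H.Walk x x), w.length = n → Even (dct D' w) := by
  classical
  intro n
  induction n using Nat.strong_induction_on with
  | _ n ih =>
    intro x w hlen
    cases w with
    | nil => simp [dct]
    | @cons _ z _ h q =>
      by_cases hq : q.IsPath
      · by_cases he : s(x, z) ∈ q.edges
        · cases q with
          | nil => simp at he
          | @cons _ y _ h' q' =>
            rw [Walk.edges_cons, List.mem_cons] at he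
            rcases he with he | he
            · have hxy : y = x := by
                rcases Sym2.eq_iff.mp he with ⟨hxz, rfl⟩ | ⟨rfl, _⟩
                · exact absurd hxz h.ne
                · rfl
              have hp' := ((Walk.cons_isPath_iff h' q').mp hq).1
              have hlen0 : q'.length = 0 := by
                subst hxy
                simpa using congrArg Walk.length (Walk.isPath_iff_eq_nil.mp hp')
              have hedges : q'.edges = [] :=
                List.length_eq_zero_iff.mp (by rw [Walk.length_edges]; exact hlen0)
              have hq0 : dct D' q' = 0 := by simp [dct, hedges]
              by_cases hm : s(x, z) ∈ D' <;>
                simp [dct_cons, hq0, hxy, hm, Sym2.eq_swap]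
            · have hz : z ∈ q'.support := Walk.snd_mem_support_of_mem_edges q' he
              exact absurd hz ((Walk.cons_isPath_iff h' q').mp hq).2
        · exact hcyc x (Walk.cons h q) ((Walk.cons_isCycle_iff q h).mpr ⟨hq, he⟩)
      · have hnd : ¬ q.support.Nodup := fun hn => hq ((Walk.isPath_def q).mpr hn)
        obtain ⟨y, hy2⟩ : ∃ y, 2 ≤ q.support.count y := by
          by_contra hco
          push_neg at hco
          exact hnd (List.nodup_iff_count_le_one.mpr (fun a => by have := hco a; omega))
        have hymem : y ∈ q.support := by
          have : 0 < q.support.count y := by omega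
          exact List.count_pos_iff.mp this
        have hspec : (q.takeUntil y hymem).append (q.dropUntil y hymem) = q :=
          q.take_spec hymem
        have hcount_t : (q.takeUntil y hymem).support.count y = 1 :=
          q.count_support_takeUntil_eq_one hymem
        have hyd : y ∈ (q.dropUntil y hymem).support.tail := by
          have hcount : q.support.count y
              = (q.takeUntil y hymem).support.count y
                + (q.dropUntil y hymem).support.tail.count y := by
            conv_lhs => rw [← hspec]
            rw [Walk.support_append, List.count_append]
          have : 0 < (q.dropUntil y hymem).support.tail.count y := by omega
          exact List.count_pos_iff.mp this
        clear hcount_t hy2 hnd hq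
        revert hspec
        revert hyd
        generalize q.takeUntil y hymem = t
        cases hdq : q.dropUntil y hymem with
        | nil => intro hyd _; simp at hyd
        | @cons _ y₂ _ hd r =>
          intro hyd hspec
          rw [Walk.support_cons] at hyd
          replace hyd : y ∈ r.support := by simpa using hyd
          have hyr : y ∈ r.support := hyd
          have hspec2 : (r.takeUntil y hyr).append (r.dropUntil y hyr) = r :=
            r.take_spec hyr
          set tk := r.takeUntil y hyr with htk
          set dp := r.dropUntil y hyr with hdp
          -- length bookkeeping
          have hlq : q.length = t.length + (r.length + 1) := by
            conv_lhs => rw [← hspec]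
            rw [Walk.length_append, Walk.length_cons]
          have hlr : r.length = tk.length + dp.length := by
            conv_lhs => rw [← hspec2]
            rw [Walk.length_append]
          have hn : n = t.length + tk.length + dp.length + 2 := by
            rw [← hlen, Walk.length_cons]
            omega
          -- the two shorter closed walks
          have h1 := ih (t.length + dp.length + 1) (by omega) x
            (Walk.cons h (t.append dp)) (by rw [Walk.length_cons, Walk.length_append])
          have h2 := ih (tk.length + 1) (by omega) y
            (Walk.cons hd tk) (by rw [Walk.length_cons])
          have hr : dct D' r = dct D' tk + dct D' dp := by
            conv_lhs => rw [← hspec2]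
            rw [dct_append]
          have hsum : dct D' (Walk.cons h q)
              = dct D' (Walk.cons h (t.append dp)) + dct D' (Walk.cons hd tk) := by
            conv_lhs => rw [← hspec]
            simp only [dct_cons, dct_append, hr]
            ring
          rw [hsum]
          exact h1.add h2

lemma parity_walks (hcyc : ∀ (x : W) (c : H.Walk x x), c.IsCycle → Even (dct D' c))
    {a x : W} (w₁ w₂ : H.Walk a x) : Even (dct D' w₁ + dct D' w₂) := by
  have := even_dct_closed D' hcyc _ a (w₁.append w₂.reverse) rfl
  rwa [dct_append, dct_reverse] at this

open Classical in
lemma exists_parity_cut (hcyc : ∀ (x : W) (c : H.Walk x x), c.IsCycle → Even (dct D' c)) :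
    ∃ S : Set W, ∀ x y, H.Adj x y → (s(x, y) ∈ D' ↔ ¬ (x ∈ S ↔ y ∈ S)) := by
  classical
  have hreach : ∀ x : W, H.Reachable (H.connectedComponentMk x).out x := fun x =>
    (ConnectedComponent.eq).mp ((H.connectedComponentMk x).out_eq)
  have wk : ∀ x : W, H.Walk (H.connectedComponentMk x).out x := fun x => (hreach x).some
  refine ⟨{x | Odd (dct D' (wk x))}, ?_⟩
  intro x y hadj
  have hrxy : (H.connectedComponentMk y).out = (H.connectedComponentMk x).out :=
    congrArg (fun C : H.ConnectedComponent => C.out) (ConnectedComponent.sound hadj.reachable).symm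
  have hcl := even_dct_closed D' hcyc _ _
    ((wk x).append (Walk.cons hadj ((wk y).reverse.copy rfl hrxy))) rfl
  rw [dct_append, dct_cons, dct_copy, dct_reverse] at hcl
  rw [Nat.even_iff] at hcl
  by_cases hm : s(x, y) ∈ D' <;>
    simp only [hm, if_true, if_false, iff_true, iff_false, true_iff, false_iff,
      Set.mem_setOf_eq, Nat.odd_iff, _root_.not_iff, not_not] at hcl ⊢ <;>
    omega

end part2

section part2b
variable {W : Type v} {H : SimpleGraph W}

open Classical in
lemma countP_nodup_eq_ncard (D' : Set (Sym2 W)) :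
    ∀ (l : List (Sym2 W)), l.Nodup →
      l.countP (fun e => decide (e ∈ D')) = ({e | e ∈ l} ∩ D').ncard := by
  intro l
  induction l with
  | nil => intro _; simp
  | cons a l ih =>
    intro hnd
    have hal : a ∉ l := (List.nodup_cons.mp hnd).1
    have hl : l.Nodup := (List.nodup_cons.mp hnd).2
    have hfin : ({e | e ∈ l} ∩ D').Finite := (List.finite_toSet l).inter_of_left _
    have hset : ({e | e ∈ a :: l} ∩ D')
        = if a ∈ D' then insert a ({e | e ∈ l} ∩ D') else ({e | e ∈ l} ∩ D') := by
      split_ifs with hm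
      · ext e'
        simp only [Set.mem_inter_iff, Set.mem_setOf_eq, List.mem_cons, Set.mem_insert_iff]
        constructor
        · rintro ⟨rfl | he', hD⟩
          · exact Or.inl rfl
          · exact Or.inr ⟨he', hD⟩
        · rintro (rfl | ⟨he', hD⟩)
          · exact ⟨Or.inl rfl, hm⟩
          · exact ⟨Or.inr he', hD⟩
      · ext e'
        simp only [Set.mem_inter_iff, Set.mem_setOf_eq, List.mem_cons]
        constructor
        · rintro ⟨rfl | he', hD⟩
          · exact absurd hD hm
          · exact ⟨he', hD⟩
        · rintro ⟨he', hD⟩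
          exact ⟨Or.inr he', hD⟩
    rw [List.countP_cons, ih hl, hset]
    simp only [decide_eq_true_eq]
    split_ifs with hm
    · rw [Set.ncard_insert_of_notMem (fun h => hal h.1) hfin]
    · simp

open Classical in
lemma dct_eq_ncard (D' : Set (Sym2 W)) {a b : W} (p : H.Walk a b) (h : p.edges.Nodup) :
    dct D' p = (p.toSubgraph.edgeSet ∩ D').ncard := by
  rw [dct, countP_nodup_eq_ncard D' p.edges h, Walk.edgeSet_toSubgraph]
  rfl

end part2b


section part4
variable {V : Type u} {G : SimpleGraph V}

/-- Path between two vertices avoiding a vertex set, from connectivity of the complement. -/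
lemma exists_path_avoiding {s : Set V} (hconn : (G.induce sᶜ).Connected) {a b : V}
    (ha : a ∈ sᶜ) (hb : b ∈ sᶜ) :
    ∃ p : G.Walk a b, p.IsPath ∧ ∀ x ∈ p.support, x ∉ s := by
  classical
  obtain ⟨w⟩ := hconn ⟨a, ha⟩ ⟨b, hb⟩
  let w' : G.Walk a b := w.map (Embedding.induce sᶜ).toHom
  refine ⟨w'.toPath, w'.toPath.2, fun x hx => ?_⟩
  have hx' : x ∈ w'.support := Walk.support_toPath_subset w' hx
  rw [show w'.support = (w.map (Embedding.induce sᶜ).toHom).support from rfl,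
    Walk.support_map] at hx'
  obtain ⟨y, _, rfl⟩ := List.mem_map.mp hx'
  exact y.2

/-- In a graph where the complement of any ≤2 vertices is connected and with ≥4
vertices, every vertex has at least 3 neighbours. -/
lemma deg3 (h4 : 4 ≤ Nat.card V)
    (hconn : ∀ s : Set V, s.ncard ≤ 2 → (G.induce sᶜ).Connected) (x : V) :
    3 ≤ (G.neighborSet x).ncard := by
  classical
  have hfin : Finite V := Nat.finite_of_card_ne_zero (by omega)
  by_contra hlt
  push_neg at hlt
  have hc := hconn (G.neighborSet x) (by omega)
  have hx : x ∈ (G.neighborSet x)ᶜ := by simp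
  obtain ⟨y, hy⟩ : ∃ y, y ∉ (G.neighborSet x ∪ {x}) := by
    by_contra hno
    push_neg at hno
    have huniv : (Set.univ : Set V) = G.neighborSet x ∪ {x} :=
      Set.eq_univ_iff_forall.mpr hno |>.symm
    have h1 : (Set.univ : Set V).ncard ≤ (G.neighborSet x).ncard + ({x} : Set V).ncard := by
      rw [huniv]; exact Set.ncard_union_le _ _
    rw [Set.ncard_univ, Set.ncard_singleton] at h1
    omega
  rw [Set.mem_union, not_or] at hy
  have hyc : y ∈ (G.neighborSet x)ᶜ := hy.1
  have hyx : y ≠ x := by simpa using hy.2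
  obtain ⟨w⟩ := hc ⟨x, hx⟩ ⟨y, hyc⟩
  have hwn : ¬ w.Nil := by
    intro hn
    have hmem := w.end_mem_support
    rw [Walk.nil_iff_support_eq.mp hn] at hmem
    simp only [List.mem_singleton] at hmem
    exact hyx (congrArg Subtype.val hmem)
  have hadj := w.adj_snd hwn
  have hadj' : G.Adj x (w.getVert 1 : V) := hadj
  exact (w.getVert 1).2 hadj'

end part4

section part5
open scoped Classical
variable {V₁ E : Type u} (L : LGraph V₁ E)

lemma toSG_adj_of_inc {e : E} {x y : V₁} (h : L.inc e = s(x, y)) : L.toSG.Adj x y := by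
  have hne : x ≠ y := by
    intro hxy
    exact L.not_diag e (by rw [h, hxy]; exact Sym2.mk_isDiag_iff.mpr rfl)
  exact (fromEdgeSet_adj _).mpr ⟨⟨e, h⟩, hne⟩

lemma mem_support_of_mem_inc_edges {x : V₁} {a b : V₁} {p : L.toSG.Walk a b} {e' : Sym2 V₁}
    (he : e' ∈ p.edges) (hx : x ∈ e') : x ∈ p.support := by
  classical
  have hsp := Sym2.other_spec' hx
  rw [← hsp] at he
  exact Walk.fst_mem_support_of_mem_edges p he

/-- Given two distinct star edges at `v`, there is a circuit meeting the star of `v`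
exactly in those two edges. -/
lemma star_pair_circuit (h3 : ThreeConnected L.toSG) {v : V₁} {d₁ d₂ : E}
    (h1 : d₁ ∈ estar L v) (h2 : d₂ ∈ estar L v) (hne : d₁ ≠ d₂) :
    ∃ X ∈ L.circuits, X ∩ estar L v = {d₁, d₂} := by
  classical
  set u := Sym2.Mem.other' h1 with hu
  set w := Sym2.Mem.other' h2 with hw
  have hd₁ : L.inc d₁ = s(v, u) := (Sym2.other_spec' h1).symm
  have hd₂ : L.inc d₂ = s(v, w) := (Sym2.other_spec' h2).symm
  have hvu : v ≠ u := fun h => L.not_diag d₁ (by rw [hd₁, h]; exact Sym2.mk_isDiag_iff.mpr rfl)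
  have hvw : v ≠ w := fun h => L.not_diag d₂ (by rw [hd₂, h]; exact Sym2.mk_isDiag_iff.mpr rfl)
  have huw : u ≠ w := by
    intro h
    apply hne
    apply L.inj
    rw [hd₁, hd₂, h]
  have hconn := h3.2 {v} (by rw [Set.ncard_singleton]; omega)
  obtain ⟨p, hp, hps⟩ := exists_path_avoiding hconn
    (by simp [hvu.symm] : u ∈ ({v} : Set V₁)ᶜ) (by simp [hvw.symm] : w ∈ ({v} : Set V₁)ᶜ)
  have hvp : v ∉ p.support := fun h => hps v h rfl
  have hadj1 : L.toSG.Adj v u := toSG_adj_of_inc L hd₁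
  have hadj2 : L.toSG.Adj w v := (toSG_adj_of_inc L hd₂).symm
  have hqpath : (p.concat hadj2).IsPath := by
    have hrev : (Walk.cons hadj2.symm p.reverse).IsPath := by
      rw [Walk.cons_isPath_iff]
      exact ⟨hp.reverse, by rwa [Walk.support_reverse, List.mem_reverse]⟩
    have := hrev.reverse
    rwa [Walk.reverse_cons, Walk.reverse_reverse] at this
  have hcyc : (Walk.cons hadj1 (p.concat hadj2)).IsCycle := by
    rw [Walk.cons_isCycle_iff]
    refine ⟨hqpath, ?_⟩
    rw [Walk.edges_concat, List.concat_eq_append, List.mem_append]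
    rintro (h | h)
    · exact hvp (Walk.fst_mem_support_of_mem_edges p h)
    · simp only [List.mem_singleton] at h
      rcases Sym2.eq_iff.mp h with ⟨h1', _⟩ | ⟨_, h2'⟩
      · exact hvw h1'
      · exact huw h2'
  have hedges : (Walk.cons hadj1 (p.concat hadj2)).edges = s(v, u) :: (p.edges ++ [s(w, v)]) := by
    rw [Walk.edges_cons, Walk.edges_concat, List.concat_eq_append]
  refine ⟨L.inc ⁻¹' (Walk.cons hadj1 (p.concat hadj2)).toSubgraph.edgeSet, ⟨(Walk.cons hadj1 (p.concat hadj2)).toSubgraph, isCycleSub_toSubgraph hcyc,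
    (Set.image_preimage_eq_of_subset (subgraph_edgeSet_subset_range L _)).symm⟩, ?_⟩
  ext e
  simp only [Set.mem_inter_iff, Set.mem_preimage, Walk.mem_edges_toSubgraph, hedges,
    List.mem_cons, List.mem_append, List.mem_singleton, List.not_mem_nil, or_false, Set.mem_insert_iff,
    Set.mem_singleton_iff]
  constructor
  · rintro ⟨hmem, hstar⟩
    rcases hmem with h | h | h
    · left; exact L.inj (h.trans hd₁.symm)
    · exfalso
      exact hvp (mem_support_of_mem_inc_edges L h hstar)
    · right
      apply L.inj
      rw [h, hd₂, Sym2.eq_swap]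
  · rintro (rfl | rfl)
    · exact ⟨Or.inl hd₁, h1⟩
    · exact ⟨Or.inr (Or.inr (by rw [hd₂, Sym2.eq_swap])), h2⟩

/-- Two edges sharing an endvertex, both avoiding `v`, lie on a common circuit
avoiding the star of `v`. -/
lemma adj_step_circuit (h3 : ThreeConnected L.toSG) {v : V₁} {e f : E}
    (he : e ∉ estar L v) (hf : f ∉ estar L v) (hne : e ≠ f)
    {x : V₁} (hxe : x ∈ L.inc e) (hxf : x ∈ L.inc f) :
    ∃ X ∈ L.circuits, X ∩ estar L v = ∅ ∧ e ∈ X ∧ f ∈ X := by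
  classical
  set a := Sym2.Mem.other' hxe with ha
  set b := Sym2.Mem.other' hxf with hb
  have hea : L.inc e = s(x, a) := (Sym2.other_spec' hxe).symm
  have hfb : L.inc f = s(x, b) := (Sym2.other_spec' hxf).symm
  have hxa : x ≠ a := fun h => L.not_diag e (by rw [hea, h]; exact Sym2.mk_isDiag_iff.mpr rfl)
  have hxb : x ≠ b := fun h => L.not_diag f (by rw [hfb, h]; exact Sym2.mk_isDiag_iff.mpr rfl)
  have hab : a ≠ b := by
    intro h
    exact hne (L.inj (by rw [hea, hfb, h]))
  have hxv : x ≠ v := fun h => he (h ▸ hxe)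
  have hav : a ≠ v := by
    intro h
    exact he (by rw [estar, Set.mem_setOf_eq, hea, ← h]; exact Sym2.mem_iff.mpr (Or.inr rfl))
  have hbv : b ≠ v := by
    intro h
    exact hf (by rw [estar, Set.mem_setOf_eq, hfb, ← h]; exact Sym2.mem_iff.mpr (Or.inr rfl))
  have hconn := h3.2 {v, x} (by
    have := Set.ncard_insert_le v ({x} : Set V₁)
    rw [Set.ncard_singleton] at this
    omega)
  obtain ⟨p, hp, hps⟩ := exists_path_avoiding hconn
    (by simp [hav, hxa.symm] : a ∈ ({v, x} : Set V₁)ᶜ)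
    (by simp [hbv, hxb.symm] : b ∈ ({v, x} : Set V₁)ᶜ)
  have hxp : x ∉ p.support := fun h => hps x h (by simp)
  have hvp : v ∉ p.support := fun h => hps v h (by simp)
  have hadj1 : L.toSG.Adj x a := toSG_adj_of_inc L hea
  have hadj2 : L.toSG.Adj b x := (toSG_adj_of_inc L hfb).symm
  have hqpath : (p.concat hadj2).IsPath := by
    have hrev : (Walk.cons hadj2.symm p.reverse).IsPath := by
      rw [Walk.cons_isPath_iff]
      exact ⟨hp.reverse, by rwa [Walk.support_reverse, List.mem_reverse]⟩
    have := hrev.reverse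
    rwa [Walk.reverse_cons, Walk.reverse_reverse] at this
  have hcyc : (Walk.cons hadj1 (p.concat hadj2)).IsCycle := by
    rw [Walk.cons_isCycle_iff]
    refine ⟨hqpath, ?_⟩
    rw [Walk.edges_concat, List.concat_eq_append, List.mem_append]
    rintro (h | h)
    · exact hxp (Walk.fst_mem_support_of_mem_edges p h)
    · simp only [List.mem_singleton] at h
      rcases Sym2.eq_iff.mp h with ⟨h1', _⟩ | ⟨_, h2'⟩
      · exact hxb h1'
      · exact hab h2'
  have hedges : (Walk.cons hadj1 (p.concat hadj2)).edges = s(x, a) :: (p.edges ++ [s(b, x)]) := by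
    rw [Walk.edges_cons, Walk.edges_concat, List.concat_eq_append]
  refine ⟨L.inc ⁻¹' (Walk.cons hadj1 (p.concat hadj2)).toSubgraph.edgeSet, ⟨(Walk.cons hadj1 (p.concat hadj2)).toSubgraph, isCycleSub_toSubgraph hcyc,
    (Set.image_preimage_eq_of_subset (subgraph_edgeSet_subset_range L _)).symm⟩, ?_, ?_, ?_⟩
  · ext g
    simp only [Set.mem_inter_iff, Set.mem_preimage, Walk.mem_edges_toSubgraph, hedges,
      List.mem_cons, List.mem_append, List.mem_singleton, List.not_mem_nil, or_false, Set.mem_empty_iff_false, iff_false,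
      not_and]
    rintro (h | h | h) hstar
    · rcases Sym2.mem_iff.mp (h ▸ hstar : v ∈ s(x, a)) with h' | h'
      · exact hxv h'.symm
      · exact hav h'.symm
    · exact hvp (mem_support_of_mem_inc_edges L h hstar)
    · rcases Sym2.mem_iff.mp (h ▸ hstar : v ∈ s(b, x)) with h' | h'
      · exact hbv h'.symm
      · exact hxv h'.symm
  · simp only [Set.mem_preimage, Walk.mem_edges_toSubgraph, hedges, List.mem_cons]
    exact Or.inl hea
  · simp only [Set.mem_preimage, Walk.mem_edges_toSubgraph, hedges, List.mem_cons,
      List.mem_append, List.mem_singleton, List.not_mem_nil, or_false]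
    exact Or.inr (Or.inr (by rw [hfb, Sym2.eq_swap]))

end part5

section part6
open scoped Classical
variable {V₁ E : Type u} (L : LGraph V₁ E)

lemma ncard_estar_ge (h3 : ThreeConnected L.toSG) (x : V₁) : 3 ≤ (estar L x).ncard := by
  rw [ncard_estar]
  exact deg3 h3.1 h3.2 x

lemma estar_ne (h3 : ThreeConnected L.toSG) {x y : V₁} (hxy : x ≠ y) :
    estar L x ≠ estar L y := by
  have hfinV : Finite V₁ := Nat.finite_of_card_ne_zero (by have := h3.1; omega)
  have hfinE : Finite E := Finite.of_injective L.inc L.inj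
  intro heq
  have h2 : 1 < (estar L x).ncard := by have := ncard_estar_ge L h3 x; omega
  obtain ⟨e₁, e₂, he₁, he₂, hne⟩ := (Set.one_lt_ncard_iff (Set.toFinite _)).mp h2
  have hy₁ : e₁ ∈ estar L y := heq ▸ he₁
  have hy₂ : e₂ ∈ estar L y := heq ▸ he₂
  have f1 : L.inc e₁ = s(x, y) := sym2_eq_pair_of_ne_mem hxy he₁ hy₁
  have f2 : L.inc e₂ = s(x, y) := sym2_eq_pair_of_ne_mem hxy he₂ hy₂
  exact hne (L.inj (f1.trans f2.symm))

lemma chain_circuits (h3 : ThreeConnected L.toSG) (v : V₁) {e f : E}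
    (he : e ∉ estar L v) (hf : f ∉ estar L v) :
    Relation.ReflTransGen
      (fun g₁ g₂ => ∃ X ∈ L.circuits, X ∩ estar L v = ∅ ∧ g₁ ∈ X ∧ g₂ ∈ X) e f := by
  classical
  obtain ⟨b, c0, hbc⟩ := sym2_exists_pair (L.inc e)
  obtain ⟨c, d0, hcd⟩ := sym2_exists_pair (L.inc f)
  have hbe : b ∈ L.inc e := by rw [hbc]; exact Sym2.mem_iff.mpr (Or.inl rfl)
  have hcf : c ∈ L.inc f := by rw [hcd]; exact Sym2.mem_iff.mpr (Or.inl rfl)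
  have hbv : b ≠ v := fun h => he (h ▸ hbe)
  have hcv : c ≠ v := fun h => hf (h ▸ hcf)
  have hconn := h3.2 {v} (by rw [Set.ncard_singleton]; omega)
  obtain ⟨p, hp, hps⟩ := exists_path_avoiding hconn
    (by simp [hbv] : b ∈ ({v} : Set V₁)ᶜ) (by simp [hcv] : c ∈ ({v} : Set V₁)ᶜ)
  have main : ∀ (n : ℕ) (b : V₁) (q : L.toSG.Walk b c), q.length = n →
      (∀ x ∈ q.support, x ≠ v) → ∀ e, e ∉ estar L v → b ∈ L.inc e →
      Relation.ReflTransGen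
        (fun g₁ g₂ => ∃ X ∈ L.circuits, X ∩ estar L v = ∅ ∧ g₁ ∈ X ∧ g₂ ∈ X) e f := by
    intro n
    induction n with
    | zero =>
      intro b q hlen havoid e he hbe
      cases q with
      | nil =>
        by_cases hef : e = f
        · exact hef ▸ Relation.ReflTransGen.refl
        · exact Relation.ReflTransGen.single (adj_step_circuit L h3 he hf hef hbe hcf)
      | cons _ _ => simp at hlen
    | succ n ih =>
      intro b q hlen havoid e he hbe
      cases q with
      | nil => simp at hlen
      | @cons _ z _ hadj q' =>
        obtain ⟨g, hg⟩ : ∃ g, L.inc g = s(b, z) := by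
          have hmem : s(b, z) ∈ Set.range L.inc := by
            rw [← L.edgeSet_toSG]
            exact hadj
          exact ⟨hmem.choose, hmem.choose_spec⟩
        have hbg : b ∈ L.inc g := by rw [hg]; exact Sym2.mem_iff.mpr (Or.inl rfl)
        have hzg : z ∈ L.inc g := by rw [hg]; exact Sym2.mem_iff.mpr (Or.inr rfl)
        have hgv : g ∉ estar L v := by
          intro hgv
          have hv : v ∈ s(b, z) := hg ▸ hgv
          rcases Sym2.mem_iff.mp hv with h' | h'
          · exact havoid b (Walk.start_mem_support _) h'.symm
          · exact havoid z (by simp) h'.symm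
        have hrest := ih z q' (by simpa using hlen)
          (fun x hx => havoid x (by simp [hx])) g hgv hzg
        by_cases heg : e = g
        · exact heg ▸ hrest
        · exact Relation.ReflTransGen.head
            (adj_step_circuit L h3 he hgv heg hbe hbg) hrest
  exact main p.length b p rfl (fun x hx h => hps x hx (h ▸ rfl)) e he hbe

end part6

section part7
open scoped Classical
variable {V₂ E : Type u} (F : LGraph V₂ E)

lemma reachable_iff_pred {W : Type*} {H : SimpleGraph W} (P : W → Prop)
    (hadj : ∀ a b, H.Adj a b → (P a ↔ P b)) :
    ∀ (n : ℕ) {a b : W} (w : H.Walk a b), w.length = n → (P a ↔ P b) := by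
  intro n
  induction n with
  | zero =>
    intro a b w hlen
    cases w with
    | nil => exact Iff.rfl
    | cons _ _ => simp at hlen
  | succ n ih =>
    intro a b w hlen
    cases w with
    | nil => simp at hlen
    | cons h q => exact (hadj _ _ h).trans (ih q (by simpa using hlen))

lemma cycle_even_dct (D : Set E)
    (ha : ∀ X ∈ F.circuits, Even ((X ∩ D).ncard)) :
    ∀ (x : V₂) (c : F.toSG.Walk x x), c.IsCycle → Even (dct (F.inc '' D) c) := by
  intro x c hc
  have hsub := subgraph_edgeSet_subset_range F c.toSubgraph
  have hX : F.inc '' (F.inc ⁻¹' c.toSubgraph.edgeSet) = c.toSubgraph.edgeSet :=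
    Set.image_preimage_eq_of_subset hsub
  have hXc : (F.inc ⁻¹' c.toSubgraph.edgeSet) ∈ F.circuits :=
    ⟨c.toSubgraph, isCycleSub_toSubgraph hc, hX.symm⟩
  rw [dct_eq_ncard _ c hc.edges_nodup]
  have himg : F.inc '' ((F.inc ⁻¹' c.toSubgraph.edgeSet) ∩ D)
      = c.toSubgraph.edgeSet ∩ (F.inc '' D) := by
    rw [Set.image_inter F.inj, hX]
  rw [← himg, Set.ncard_image_of_injective _ F.inj]
  exact ha _ hXc

lemma final_part (hni : ∀ v : V₂, ∃ e : E, v ∈ F.inc e) (D : Set E)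
    (hDcard : 3 ≤ D.ncard)
    (hb : ∀ d₁ ∈ D, ∀ d₂ ∈ D, d₁ ≠ d₂ → ∃ X ∈ F.circuits, X ∩ D = {d₁, d₂})
    (S : Set V₂)
    (hS : ∀ x y, F.toSG.Adj x y → (s(x, y) ∈ (F.inc '' D) ↔ ¬ (x ∈ S ↔ y ∈ S)))
    (hall : ∀ e ∉ D, ∀ x ∈ F.inc e, x ∉ S) :
    ∃ x : V₂, D = estar F x := by
  classical
  have hcross : ∀ (e : E) (x y : V₂), F.inc e = s(x, y) → (e ∈ D ↔ ¬ (x ∈ S ↔ y ∈ S)) := by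
    intro e x y hxy
    have hadj : F.toSG.Adj x y := toSG_adj_of_inc F hxy
    rw [← hS x y hadj, ← hxy]
    constructor
    · exact fun h => ⟨e, h, rfl⟩
    · rintro ⟨e', he', heq⟩
      rwa [← F.inj heq]
  have hstar_sub : ∀ x ∈ S, estar F x ⊆ D := by
    intro x hx e he
    by_contra hne
    exact hall e hne x he hx
  obtain ⟨d₀, hd₀⟩ : D.Nonempty := Set.nonempty_of_ncard_ne_zero (by omega)
  obtain ⟨p, q, hpq⟩ := sym2_exists_pair (F.inc d₀)
  obtain ⟨x, hxS⟩ : ∃ x, x ∈ S := by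
    have hne := (hcross d₀ p q hpq).mp hd₀
    by_cases hp : p ∈ S
    · exact ⟨p, hp⟩
    · refine ⟨q, ?_⟩
      by_contra hq
      exact hne (iff_of_false hp hq)
  have huniq : ∀ y ∈ S, y = x := by
    intro y hyS
    by_contra hyx
    have hnoedge : ∀ g : E, ¬ (x ∈ F.inc g ∧ y ∈ F.inc g) := by
      rintro g ⟨hxg, hyg⟩
      have hg : F.inc g = s(x, y) :=
        sym2_eq_pair_of_ne_mem (fun h => hyx h.symm) hxg hyg
      by_cases hgD : g ∈ D
      · exact (hcross g x y hg).mp hgD (iff_of_true hxS hyS)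
      · exact hall g hgD x hxg hxS
    obtain ⟨d₁, hd₁x⟩ := hni x
    obtain ⟨d₂, hd₂y⟩ := hni y
    have hd₁D : d₁ ∈ D := by
      by_contra h
      exact hall d₁ h x hd₁x hxS
    have hd₂D : d₂ ∈ D := by
      by_contra h
      exact hall d₂ h y hd₂y hyS
    have hdne : d₁ ≠ d₂ := by
      rintro rfl
      exact hnoedge d₁ ⟨hd₁x, hd₂y⟩
    obtain ⟨X, hXc, hXD⟩ := hb d₁ hd₁D d₂ hd₂D hdne
    obtain ⟨C, hCc, hCX⟩ := hXc
    have hXpre : F.inc ⁻¹' C.edgeSet = X := by rw [hCX, Set.preimage_image_eq _ F.inj]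
    have hd₁X : d₁ ∈ X := by
      have h1 : d₁ ∈ X ∩ D := by rw [hXD]; exact Set.mem_insert _ _
      exact h1.1
    have hxverts : x ∈ C.verts := by
      have hmem : F.inc d₁ ∈ C.edgeSet := by
        rw [hCX]; exact ⟨d₁, hd₁X, rfl⟩
      obtain ⟨xx, yy, hxy⟩ := sym2_exists_pair (F.inc d₁)
      rw [hxy] at hmem
      have hadj := Subgraph.mem_edgeSet.mp hmem
      rcases Sym2.mem_iff.mp (hxy ▸ hd₁x : x ∈ s(xx, yy)) with h | h
      · exact h ▸ C.edge_vert hadj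
      · exact h ▸ C.edge_vert hadj.symm
    have hcount : (X ∩ estar F x).ncard = 2 := by
      rw [← hXpre, circuit_inter_star F hCc, if_pos hxverts]
    have hsub2 : X ∩ estar F x ⊆ {d₁, d₂} := by
      rw [← hXD]
      exact fun g hg => ⟨hg.1, hstar_sub x hxS hg.2⟩
    have heq2 : X ∩ estar F x = {d₁, d₂} := by
      apply Set.eq_of_subset_of_ncard_le hsub2 ?_ (Set.toFinite _)
      rw [hcount, Set.ncard_pair hdne]
    have hd₂x : x ∈ F.inc d₂ := by
      have h2 : d₂ ∈ X ∩ estar F x := by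
        rw [heq2]; exact Set.mem_insert_of_mem _ rfl
      exact h2.2
    exact hnoedge d₂ ⟨hd₂x, hd₂y⟩
  refine ⟨x, ?_⟩
  ext e
  constructor
  · intro heD
    obtain ⟨p', q', hpq'⟩ := sym2_exists_pair (F.inc e)
    have hcr := (hcross e p' q' hpq').mp heD
    by_cases hp' : p' ∈ S
    · have hpx := huniq p' hp'
      rw [estar, Set.mem_setOf_eq, hpq', ← hpx]
      exact Sym2.mem_iff.mpr (Or.inl rfl)
    · have hq' : q' ∈ S := by
        by_contra hq'
        exact hcr (iff_of_false hp' hq')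
      have hqx := huniq q' hq'
      rw [estar, Set.mem_setOf_eq, hpq', ← hqx]
      exact Sym2.mem_iff.mpr (Or.inr rfl)
  · intro hex
    by_contra heD
    exact hall e heD x hex hxS

theorem star_reconstruct (hni : ∀ v : V₂, ∃ e : E, v ∈ F.inc e) (D : Set E)
    (hDcard : 3 ≤ D.ncard)
    (ha : ∀ X ∈ F.circuits, Even ((X ∩ D).ncard))
    (hb : ∀ d₁ ∈ D, ∀ d₂ ∈ D, d₁ ≠ d₂ → ∃ X ∈ F.circuits, X ∩ D = {d₁, d₂})
    (hchn : ∀ e f : E, e ∉ D → f ∉ D → Relation.ReflTransGen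
        (fun g₁ g₂ => ∃ X ∈ F.circuits, X ∩ D = ∅ ∧ g₁ ∈ X ∧ g₂ ∈ X) e f) :
    ∃ x : V₂, D = estar F x := by
  classical
  obtain ⟨S, hS⟩ := exists_parity_cut (F.inc '' D) (cycle_even_dct F D ha)
  have hcross : ∀ (e : E) (x y : V₂), F.inc e = s(x, y) → (e ∈ D ↔ ¬ (x ∈ S ↔ y ∈ S)) := by
    intro e x y hxy
    have hadj : F.toSG.Adj x y := toSG_adj_of_inc F hxy
    rw [← hS x y hadj, ← hxy]
    constructor
    · exact fun h => ⟨e, h, rfl⟩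
    · rintro ⟨e', he', heq⟩
      rwa [← F.inj heq]
  -- endpoints of a non-D edge lie on the same side
  have hsides : ∀ e ∉ D, ∀ x y : V₂, F.inc e = s(x, y) → (x ∈ S ↔ y ∈ S) := by
    intro e heD x y hxy
    by_contra hne
    exact heD ((hcross e x y hxy).mpr hne)
  -- all vertices of a D-avoiding circuit lie on the same side
  have hsame : ∀ X ∈ F.circuits, X ∩ D = ∅ → ∀ g₁ ∈ X, ∀ g₂ ∈ X,
      ((∀ z ∈ F.inc g₁, z ∈ S) ↔ (∀ z ∈ F.inc g₂, z ∈ S)) := by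
    rintro X ⟨C, hCc, hCX⟩ hXD g₁ hg₁ g₂ hg₂
    have hXnD : ∀ g ∈ X, g ∉ D := by
      intro g hg hgD
      exact absurd (hXD ▸ (show g ∈ X ∩ D from ⟨hg, hgD⟩)) (Set.notMem_empty g)
    -- vertices of C lie on the same side
    have hvert : ∀ a b : C.verts, ((a : V₂) ∈ S ↔ (b : V₂) ∈ S) := by
      intro a b
      obtain ⟨w⟩ := hCc.1 a b
      refine reachable_iff_pred (fun z : C.verts => (z : V₂) ∈ S) ?_ w.length w rfl
      intro a' b' hadj
      have hadj' : C.Adj a' b' := hadj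
      have hmem : s((a' : V₂), (b' : V₂)) ∈ C.edgeSet := Subgraph.mem_edgeSet.mpr hadj'
      rw [hCX] at hmem
      obtain ⟨g, hgX, hginc⟩ := hmem
      exact hsides g (hXnD g hgX) _ _ hginc
    -- relate "all endpoints in S" to a single endpoint, for each gᵢ
    have key : ∀ g ∈ X, ∀ x y : V₂, F.inc g = s(x, y) →
        ((∀ z ∈ F.inc g, z ∈ S) ↔ (x ∈ S)) := by
      intro g hg x y hxy
      have hiff := hsides g (hXnD g hg) x y hxy
      constructor
      · intro h
        exact h x (by rw [hxy]; exact Sym2.mem_iff.mpr (Or.inl rfl))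
      · intro hx z hz
        rw [hxy] at hz
        rcases Sym2.mem_iff.mp hz with rfl | rfl
        · exact hx
        · exact hiff.mp hx
    obtain ⟨x₁, y₁, h₁⟩ := sym2_exists_pair (F.inc g₁)
    obtain ⟨x₂, y₂, h₂⟩ := sym2_exists_pair (F.inc g₂)
    -- x₁ and x₂ are vertices of C
    have hv₁ : x₁ ∈ C.verts := by
      have hmem : F.inc g₁ ∈ C.edgeSet := by rw [hCX]; exact ⟨g₁, hg₁, rfl⟩
      rw [h₁] at hmem
      exact C.edge_vert (Subgraph.mem_edgeSet.mp hmem)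
    have hv₂ : x₂ ∈ C.verts := by
      have hmem : F.inc g₂ ∈ C.edgeSet := by rw [hCX]; exact ⟨g₂, hg₂, rfl⟩
      rw [h₂] at hmem
      exact C.edge_vert (Subgraph.mem_edgeSet.mp hmem)
    rw [key g₁ hg₁ x₁ y₁ h₁, key g₂ hg₂ x₂ y₂ h₂]
    exact hvert ⟨x₁, hv₁⟩ ⟨x₂, hv₂⟩
  -- chains preserve sides
  have hchain : ∀ e f : E, Relation.ReflTransGen
      (fun g₁ g₂ => ∃ X ∈ F.circuits, X ∩ D = ∅ ∧ g₁ ∈ X ∧ g₂ ∈ X) e f →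
      ((∀ z ∈ F.inc e, z ∈ S) ↔ (∀ z ∈ F.inc f, z ∈ S)) := by
    intro e f h
    induction h with
    | refl => exact Iff.rfl
    | tail _ hstep ih =>
      obtain ⟨X, hXc, hXD, hg₁, hg₂⟩ := hstep
      exact ih.trans (hsame X hXc hXD _ hg₁ _ hg₂)
  by_cases hex : ∃ e₀, e₀ ∉ D ∧ ∀ z ∈ F.inc e₀, z ∈ S
  · refine final_part F hni D hDcard hb Sᶜ ?_ ?_
    · intro x y hadj
      rw [hS x y hadj]
      constructor <;> intro h h' <;> apply h <;>
        · simp only [Set.mem_compl_iff] at h' ⊢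
          tauto
    · intro e heD z hz hzc
      obtain ⟨e₀, he₀D, he₀S⟩ := hex
      have hiff := hchain e₀ e (hchn e₀ e he₀D heD)
      exact hzc (hiff.mp he₀S z hz)
  · push_neg at hex
    refine final_part F hni D hDcard hb S hS ?_
    intro e heD z hz hzS
    obtain ⟨p', q', hpq'⟩ := sym2_exists_pair (F.inc e)
    have hside := hsides e heD p' q' hpq'
    have hallS : ∀ z' ∈ F.inc e, z' ∈ S := by
      intro z' hz'
      rw [hpq'] at hz'
      have hzin : z ∈ s(p', q') := hpq' ▸ hz
      rcases Sym2.mem_iff.mp hz' with rfl | rfl <;>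
        rcases Sym2.mem_iff.mp hzin with rfl | rfl <;> tauto
    obtain ⟨z₀, hz₀, hz₀S⟩ := hex e heD
    exact hz₀S (hallS z₀ hz₀)

end part7

/-- Whitney's theorem: graphs with the same edge labels and the same circuits,
one 3-connected and the other without isolated vertices, are strongly isomorphic. -/
theorem stmt1 {V₁ V₂ E : Type u} (G : LGraph V₁ E) (F : LGraph V₂ E)
    (h3 : ThreeConnected G.toSG) (hni : ∀ v : V₂, ∃ e : E, v ∈ F.inc e)
    (hcirc : G.circuits = F.circuits) :
    ∃ φ : V₁ ≃ V₂, ∀ e : E, F.inc e = Sym2.map φ (G.inc e) := by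
  classical
  have hstar : ∀ v : V₁, ∃ x : V₂, estar G v = estar F x := by
    intro v
    apply star_reconstruct F hni (estar G v)
    · exact ncard_estar_ge G h3 v
    · rw [← hcirc]; exact star_even G v
    · intro d₁ h1 d₂ h2 hne
      rw [← hcirc]
      exact star_pair_circuit G h3 h1 h2 hne
    · intro e f he hf
      rw [← hcirc]
      exact chain_circuits G h3 v he hf
  choose ψ hψ using hstar
  have hinj : Function.Injective ψ := by
    intro a b hab
    by_contra hne
    exact estar_ne G h3 hne (by rw [hψ a, hψ b, hab])
  have hkey : ∀ (e : E) (p q : V₁), G.inc e = s(p, q) → F.inc e = s(ψ p, ψ q) := by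
    intro e p q hpq
    have hpq' : p ≠ q := fun h => G.not_diag e (by rw [hpq, h]; exact Sym2.mk_isDiag_iff.mpr rfl)
    have hap : ψ p ∈ F.inc e := by
      have hp : e ∈ estar G p := by
        rw [estar, Set.mem_setOf_eq, hpq]
        exact Sym2.mem_iff.mpr (Or.inl rfl)
      rw [hψ p] at hp
      exact hp
    have haq : ψ q ∈ F.inc e := by
      have hq : e ∈ estar G q := by
        rw [estar, Set.mem_setOf_eq, hpq]
        exact Sym2.mem_iff.mpr (Or.inr rfl)
      rw [hψ q] at hq
      exact hq
    have hne2 : ψ p ≠ ψ q := fun h => hpq' (hinj h)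
    exact sym2_eq_pair_of_ne_mem hne2 hap haq
  have hsurj : Function.Surjective ψ := by
    intro y
    obtain ⟨e, hy⟩ := hni y
    obtain ⟨p, q, hpq⟩ := sym2_exists_pair (G.inc e)
    rw [hkey e p q hpq] at hy
    rcases Sym2.mem_iff.mp hy with rfl | rfl
    · exact ⟨p, rfl⟩
    · exact ⟨q, rfl⟩
  refine ⟨Equiv.ofBijective ψ ⟨hinj, hsurj⟩, ?_⟩
  intro e
  obtain ⟨p, q, hpq⟩ := sym2_exists_pair (G.inc e)
  rw [hkey e p q hpq, hpq, Sym2.map_pair_eq]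
  rfl
end

section
/- Let G be a topologically 3-connected graph and T a thread of G such that G' = G − (T) is topologically 3-connected. Then every non-separating cycle Q of G' for which T is not a path-chord of Q is also a non-separating cycle of G. -/
open SimpleGraph

universe u v

variable {V : Type u} {W : Type v}

open Set

section Aux
variable {U : Type u} {U' : Type v}







/-- Map a walk along a vertex map that sends edges to equalities-or-edges,
landing in an induced subgraph. -/
lemma reach_of_walk {Γ : SimpleGraph U} {Γ' : SimpleGraph U'} {φ : U → U'}
    (hφ : ∀ a b, Γ.Adj a b → φ a = φ b ∨ Γ'.Adj (φ a) (φ b)) {D : Set U'} :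
    ∀ {a b : U} (p : Γ.Walk a b), (∀ u ∈ p.support, φ u ∈ D) →
      ∀ (ha : φ a ∈ D) (hb : φ b ∈ D),
      (Γ'.induce D).Reachable ⟨φ a, ha⟩ ⟨φ b, hb⟩ := by
  intro a b p
  induction p with
  | nil => intro _ ha hb; exact Reachable.refl _
  | @cons a c b h q ih =>
    intro hsup ha hb
    have hc : φ c ∈ D := hsup c (by simp [SimpleGraph.Walk.support_cons])
    have hrest := ih (fun u hu => hsup u (by simp [SimpleGraph.Walk.support_cons, hu])) hc hb
    rcases hφ _ _ h with he | hadj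
    · have heq : (⟨φ a, ha⟩ : D) = ⟨φ c, hc⟩ := Subtype.ext he
      rw [heq]; exact hrest
    · refine (Reachable.trans ?_ hrest)
      exact SimpleGraph.Adj.reachable (by exact hadj)

/-- Transport reachability along a map that sends edges to reachability. -/
lemma reach_of_walk' {Γ : SimpleGraph U} {Γ' : SimpleGraph U'} {φ : U → U'}
    (hφ : ∀ a b, Γ.Adj a b → Γ'.Reachable (φ a) (φ b)) :
    ∀ {a b : U} (p : Γ.Walk a b), Γ'.Reachable (φ a) (φ b) := by
  intro a b p
  induction p with
  | nil => exact Reachable.refl _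
  | cons h q ih => exact (hφ _ _ h).trans ih

variable {Γ : SimpleGraph U}

lemma avoid_take [DecidableEq U] {s z : U} {r : Γ.Walk s z} (hr : r.IsPath) {u : U}
    (hu : u ∈ r.support) (hne : u ≠ z) : z ∉ (r.takeUntil u hu).support := by
  intro hz
  have hspec := r.take_spec hu
  have hnodup : r.support.Nodup := hr.support_nodup
  rw [← hspec, SimpleGraph.Walk.support_append, List.nodup_append] at hnodup
  have hz2 : z ∈ (r.dropUntil u hu).support.tail := by
    have hzend : z ∈ (r.dropUntil u hu).support := SimpleGraph.Walk.end_mem_support _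
    rw [SimpleGraph.Walk.support_eq_cons, List.mem_cons] at hzend
    rcases hzend with h | h
    · exact absurd h.symm hne
    · exact h
  exact hnodup.2.2 _ hz _ hz2 rfl

lemma avoid_drop [DecidableEq U] {z t : U} {r : Γ.Walk z t} (hr : r.IsPath) {u : U}
    (hu : u ∈ r.support) (hne : u ≠ z) : z ∉ (r.dropUntil u hu).support := by
  intro hz
  have hspec := r.take_spec hu
  have hnodup : r.support.Nodup := hr.support_nodup
  rw [← hspec, SimpleGraph.Walk.support_append, List.nodup_append] at hnodup
  have hz2 : z ∈ (r.dropUntil u hu).support.tail := by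
    rw [SimpleGraph.Walk.support_eq_cons, List.mem_cons] at hz
    rcases hz with h | h
    · exact absurd h hne.symm  -- z = u? careful
    · exact h
  exact hnodup.2.2 _ (SimpleGraph.Walk.start_mem_support _) _ hz2 rfl

lemma mem_take_or_drop [DecidableEq U] {s t : U} (r : Γ.Walk s t) {u z : U}
    (hu : u ∈ r.support) (hz : z ∈ r.support) :
    u ∈ (r.takeUntil z hz).support ∨ u ∈ (r.dropUntil z hz).support := by
  have hspec := r.take_spec hz
  rw [← hspec, SimpleGraph.Walk.support_append, List.mem_append] at hu
  rcases hu with h | h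
  · exact Or.inl h
  · exact Or.inr (List.mem_of_mem_tail h)

/-- From a vertex on a path, one can walk to one of the two ends avoiding a
given other vertex of the path. -/
lemma avoid_end [DecidableEq U] {s t : U} {p : Γ.Walk s t} (hp : p.IsPath) {u z : U}
    (hu : u ∈ p.support) (hz : z ∈ p.support) (hne : u ≠ z) :
    (∃ q : Γ.Walk u s, ∀ w ∈ q.support, w ≠ z) ∨
    (∃ q : Γ.Walk u t, ∀ w ∈ q.support, w ≠ z) := by
  rcases mem_take_or_drop p hu hz with h | h
  · left
    have hzn : z ∉ ((p.takeUntil z hz).takeUntil u h).support :=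
      avoid_take (hp.takeUntil hz) h hne
    refine ⟨((p.takeUntil z hz).takeUntil u h).reverse, ?_⟩
    intro w hw hwz
    rw [SimpleGraph.Walk.support_reverse, List.mem_reverse] at hw
    exact hzn (hwz ▸ hw)
  · right
    have hzn : z ∉ ((p.dropUntil z hz).dropUntil u h).support :=
      avoid_drop (hp.dropUntil hz) h hne
    refine ⟨(p.dropUntil z hz).dropUntil u h, ?_⟩
    intro w hw hwz
    exact hzn (hwz ▸ hw)

end Aux

section Blocks
variable {W : Type v} (H : SimpleGraph W)

lemma singleton_good (w : W) : GoodBlockSet H {w} := by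
  refine ⟨⟨w, rfl⟩, (SimpleGraph.connected_iff _).2 ⟨?_, ⟨⟨w, rfl⟩⟩⟩, ?_⟩
  · intro u v
    have huv : u = v := Subtype.ext (by rw [u.2, v.2])
    rw [huv]
  · intro v u1 u2
    have h1 : (u1 : W) = w := u1.2.1
    have h2 : (u2 : W) = w := u2.2.1
    have h12 : u1 = u2 := Subtype.ext (by rw [h1, h2])
    rw [h12]

lemma exists_block [Finite W] (w : W) : ∃ S : Set W, IsBlockSet H S ∧ w ∈ S := by
  have hfin : ({S : Set W | GoodBlockSet H S ∧ w ∈ S}).Finite := Set.toFinite _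
  have hne : ({S : Set W | GoodBlockSet H S ∧ w ∈ S}).Nonempty :=
    ⟨{w}, singleton_good H w, rfl⟩
  obtain ⟨S, ⟨hgood, hw⟩, hmax⟩ := Set.Finite.exists_maximalFor id _ hfin hne
  refine ⟨S, ⟨hgood, ?_⟩, hw⟩
  intro S' hsub hgood'
  exact le_antisymm (hmax ⟨hgood', hsub hw⟩ hsub) hsub

lemma numBlocks_eq_one [Finite W] (h : GoodBlockSet H Set.univ) : numBlocks H = 1 := by
  have hset : {S : Set W | IsBlockSet H S} = {Set.univ} := by
    ext S
    simp only [Set.mem_setOf_eq, Set.mem_singleton_iff]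
    constructor
    · rintro ⟨-, hmax⟩
      exact (hmax Set.univ (Set.subset_univ _) h).symm
    · rintro rfl
      exact ⟨h, fun S' hsub _ => Set.eq_univ_of_univ_subset hsub⟩
  rw [numBlocks, hset, Set.ncard_singleton]

lemma one_le_numBlocks [Finite W] [Nonempty W] : 1 ≤ numBlocks H := by
  obtain ⟨S, hS, -⟩ := exists_block H (Classical.arbitrary W)
  have : (0 : ℕ) < numBlocks H := by
    rw [numBlocks, Set.ncard_pos (Set.toFinite _)]
    exact ⟨S, hS⟩
  omega

lemma good_univ_of_numBlocks_le_one [Finite W] [Nonempty W]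
    (h : numBlocks H ≤ 1) : GoodBlockSet H Set.univ := by
  have hsub : ∀ S S' : Set W, IsBlockSet H S → IsBlockSet H S' → S = S' := by
    intro S S' hS hS'
    exact (Set.ncard_le_one (Set.toFinite _)).1 h S hS S' hS'
  obtain ⟨S0, hS0, hw0⟩ := exists_block H (Classical.arbitrary W)
  have huniv : S0 = Set.univ := by
    apply Set.eq_univ_of_forall
    intro w
    obtain ⟨Sw, hSw, hwmem⟩ := exists_block H w
    rw [hsub S0 Sw hS0 hSw]
    exact hwmem
  rw [← huniv]
  exact hS0.1

end Blocks

section Top3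
variable {U : Type u}

lemma exists_adj_of_reachable_ne {Γ : SimpleGraph U} {a b : U} (h : Γ.Reachable a b)
    (hne : a ≠ b) : ∃ c, Γ.Adj a c := by
  obtain ⟨p⟩ := h
  cases p with
  | nil => exact absurd rfl hne
  | cons h q => exact ⟨_, h⟩

lemma top3_good [Finite U] {Γ : SimpleGraph U} (h : TopThreeConnected Γ) :
    GoodBlockSet Γ Set.univ := by
  classical
  obtain ⟨W, H, ⟨h4, hconn⟩, f, P, hPpath, hPrev, hPint, hPdisj, hPcover, hPedge⟩ := h
  have hWfin : Finite W := (Nat.card_pos_iff.1 (by omega)).2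
  have hWne : Nonempty W := (Nat.card_pos_iff.1 (by omega)).1
  have hUne : Nonempty U := ⟨f (Classical.arbitrary W)⟩
  -- every vertex has a neighbour outside any set of size ≤ 2
  have hadj_notin : ∀ (w : W) (F : Set W), F.ncard ≤ 2 → ∃ c, H.Adj w c ∧ c ∉ F := by
    intro w F hF
    by_contra hno
    push_neg at hno
    set F' : Set W := F \ {w} with hF'def
    have hF'2 : F'.ncard ≤ 2 := le_trans (Set.ncard_le_ncard Set.diff_subset (Set.toFinite _)) hF
    have hwmem : w ∈ F'ᶜ := by simp [hF'def]
    obtain ⟨u, huF, huw⟩ : ∃ u, u ∉ F' ∧ u ≠ w := by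
      by_contra hno2
      push_neg at hno2
      have hsub : (Set.univ : Set W) ⊆ insert w F' := by
        intro z _
        by_cases hz : z ∈ F'
        · exact Set.mem_insert_of_mem _ hz
        · exact (hno2 z hz) ▸ Set.mem_insert _ _
      have hcard : Nat.card W ≤ 3 := by
        calc Nat.card W = (Set.univ : Set W).ncard := (Set.ncard_univ W).symm
        _ ≤ (insert w F').ncard := Set.ncard_le_ncard hsub (Set.toFinite _)
        _ ≤ F'.ncard + 1 := Set.ncard_insert_le _ _
        _ ≤ 3 := by omega
      omega
    have hreach := ((hconn F' hF'2).preconnected ⟨w, hwmem⟩ ⟨u, huF⟩)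
    obtain ⟨c, hc⟩ := exists_adj_of_reachable_ne hreach
      (fun e => huw (congrArg Subtype.val e).symm)
    have hcadj : H.Adj w ↑c := hc
    have := hno ↑c hcadj
    have hcF' : (c : W) ∈ F' := ⟨this, by simpa using hcadj.ne.symm⟩
    exact c.2 hcF'
  -- global preconnectedness of Γ
  have hHconn : H.Connected := by
    have h0 : (∅ : Set W).ncard ≤ 2 := by simp
    refine SimpleGraph.Connected.map (G := H.induce (∅ᶜ : Set W))
      ⟨Subtype.val, fun {a b} hab => hab⟩ (fun u => ⟨⟨u, by simp⟩, rfl⟩) (hconn ∅ h0)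
  have hbrΓ : ∀ w1 w2 : W, Γ.Reachable (f w1) (f w2) := by
    intro w1 w2
    obtain ⟨p⟩ := hHconn.preconnected w1 w2
    exact reach_of_walk' (φ := fun w => f w) (fun a b hab => ⟨P hab⟩) p
  have hanyΓ : ∀ u : U, ∃ w : W, Γ.Reachable u (f w) := by
    intro u
    rcases hPcover u with ⟨w, rfl⟩ | ⟨a, b, hab, hu⟩
    · exact ⟨w, Reachable.refl _⟩
    · exact ⟨a, ⟨((P hab).takeUntil u hu).reverse⟩⟩
  have hpre : Γ.Preconnected := by
    intro u1 u2
    obtain ⟨w1, h1⟩ := hanyΓ u1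
    obtain ⟨w2, h2⟩ := hanyΓ u2
    exact (h1.trans (hbrΓ w1 w2)).trans h2.symm
  refine ⟨Set.univ_nonempty, ?_, ?_⟩
  · exact SimpleGraph.Connected.map (G := Γ) ⟨fun u => ⟨u, trivial⟩, fun {a b} hab => hab⟩
      (fun ⟨u, _⟩ => ⟨u, rfl⟩) (SimpleGraph.Connected.mk hpre)
  -- the one-vertex-deleted case
  intro v
  set Dv : Set U := Set.univ \ {v} with hDvdef
  have hmemD : ∀ {u : U}, u ≠ v → u ∈ Dv := fun h => ⟨trivial, h⟩
  -- obtain the bad set B with its properties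
  obtain ⟨B, hB2, hfB, hPavoid, hesc⟩ :
      ∃ B : Set W, B.ncard ≤ 2 ∧ (∀ w, w ∉ B → f w ≠ v) ∧
        (∀ a b (h : H.Adj a b), a ∉ B → b ∉ B → ∀ z ∈ (P h).support, z ≠ v) ∧
        (∀ w, f w ≠ v → w ∈ B → ∃ c, ∃ (h : H.Adj w c), c ∉ B ∧
            (∀ z ∈ (P h).support, z ≠ v)) := by
    by_cases hvr : v ∈ Set.range f
    · obtain ⟨w0, rfl⟩ := hvr
      refine ⟨{w0}, by simp, ?_, ?_, ?_⟩
      · intro w hw he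
        exact hw (by simpa using f.injective he)
      · intro a b hab ha hb z hz he
        subst he
        have hor : f w0 = f a ∨ f w0 = f b := by
          by_contra hne
          push_neg at hne
          exact hPint a b hab _ hz hne.1 hne.2 ⟨w0, rfl⟩
        rcases hor with e | e
        · exact ha (Set.mem_singleton_iff.2 (f.injective e).symm)
        · exact hb (Set.mem_singleton_iff.2 (f.injective e).symm)
      · intro w hwv hwB
        exact absurd (by simpa using hwB : w = w0) (fun e => hwv (by rw [e]))
    · have hex : ∃ a b, ∃ (h : H.Adj a b), v ∈ (P h).support := by
        rcases hPcover v with h | h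
        · exact absurd h hvr
        · exact h
      obtain ⟨a0, b0, h0, hv0⟩ := hex
      have hB2 : ({a0, b0} : Set W).ncard ≤ 2 := by
        calc ({a0, b0} : Set W).ncard ≤ ({b0} : Set W).ncard + 1 := Set.ncard_insert_le _ _
        _ ≤ 2 := by simp
      have havoid : ∀ a b (h : H.Adj a b), s(a, b) ≠ s(a0, b0) →
          ∀ z ∈ (P h).support, z ≠ v := by
        intro a b hab hne z hz he
        subst he
        exact hvr (hPdisj a b a0 b0 hab h0 hne _ hz hv0)
      refine ⟨{a0, b0}, hB2, ?_, ?_, ?_⟩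
      · intro w _ he
        exact hvr ⟨w, he⟩
      · intro a b hab ha hb
        refine havoid a b hab (fun he => ?_)
        rw [Sym2.eq_iff] at he
        rcases he with ⟨e1, e2⟩ | ⟨e1, e2⟩
        · exact ha (by rw [e1]; exact Set.mem_insert _ _)
        · exact ha (by rw [e1]; exact Set.mem_insert_of_mem _ rfl)
      · intro w hwv hwB
        obtain ⟨c, hwc, hcB⟩ := hadj_notin w {a0, b0} hB2
        refine ⟨c, hwc, hcB, havoid w c hwc (fun he => ?_)⟩
        rw [Sym2.eq_iff] at he
        rcases he with ⟨e1, e2⟩ | ⟨e1, e2⟩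
        · exact hcB (by rw [e2]; exact Set.mem_insert_of_mem _ rfl)
        · exact hcB (by rw [e2]; exact Set.mem_insert _ _)
  -- realization of a single H-edge avoiding v
  have hstep : ∀ a b (h : H.Adj a b), (∀ z ∈ (P h).support, z ≠ v) →
      ∀ (ha : f a ∈ Dv) (hb : f b ∈ Dv),
      (Γ.induce Dv).Reachable ⟨f a, ha⟩ ⟨f b, hb⟩ := by
    intro a b h hav ha hb
    exact reach_of_walk (φ := fun u => u) (fun a b hab => Or.inr hab) (P h)
      (fun u hu => hmemD (hav u hu)) ha hb
  have hbranch : ∀ w1 w2, w1 ∉ B → w2 ∉ B → ∀ (m1 : f w1 ∈ Dv) (m2 : f w2 ∈ Dv),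
      (Γ.induce Dv).Reachable ⟨f w1, m1⟩ ⟨f w2, m2⟩ := by
    intro w1 w2 h1 h2 m1 m2
    obtain ⟨p⟩ := (hconn B hB2).preconnected ⟨w1, h1⟩ ⟨w2, h2⟩
    exact reach_of_walk' (Γ := H.induce (Bᶜ : Set W))
      (φ := fun c => (⟨f c, hmemD (hfB _ c.2)⟩ : Dv))
      (fun c d hcd => hstep ↑c ↑d hcd (hPavoid _ _ hcd c.2 d.2) _ _) p
  have hescape : ∀ w, f w ≠ v → ∀ (m : f w ∈ Dv), ∃ w', ∃ (hw' : w' ∉ B),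
      (Γ.induce Dv).Reachable ⟨f w, m⟩ ⟨f w', hmemD (hfB _ hw')⟩ := by
    intro w hwv m
    by_cases hwB : w ∈ B
    · obtain ⟨c, hwc, hcB, hav⟩ := hesc w hwv hwB
      exact ⟨c, hcB, hstep w c hwc hav m (hmemD (hfB _ hcB))⟩
    · exact ⟨w, hwB, Reachable.refl _⟩
  have hwalkid : ∀ {u1 u2 : U} (q : Γ.Walk u1 u2), (∀ z ∈ q.support, z ≠ v) →
      ∀ (m1 : u1 ∈ Dv) (m2 : u2 ∈ Dv), (Γ.induce Dv).Reachable ⟨u1, m1⟩ ⟨u2, m2⟩ := by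
    intro u1 u2 q hq m1 m2
    exact reach_of_walk (φ := fun u => u) (fun a b hab => Or.inr hab) q
      (fun u hu => hmemD (hq u hu)) m1 m2
  have hrep : ∀ u, u ≠ v → ∀ (hm : u ∈ Dv), ∃ w, ∃ (hw : w ∉ B),
      (Γ.induce Dv).Reachable ⟨u, hm⟩ ⟨f w, hmemD (hfB w hw)⟩ := by
    intro u hu hm
    rcases hPcover u with ⟨w, rfl⟩ | ⟨a, b, hab, husup⟩
    · exact hescape w hu hm
    · by_cases hvin : v ∈ (P hab).support
      · rcases avoid_end (hPpath a b hab).1 husup hvin hu with ⟨q, hq⟩ | ⟨q, hq⟩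
        · have hfa : f a ≠ v := hq _ q.end_mem_support
          have r := hwalkid q hq hm (hmemD hfa)
          obtain ⟨w', hw', r'⟩ := hescape a hfa (hmemD hfa)
          exact ⟨w', hw', r.trans r'⟩
        · have hfb : f b ≠ v := hq _ q.end_mem_support
          have r := hwalkid q hq hm (hmemD hfb)
          obtain ⟨w', hw', r'⟩ := hescape b hfb (hmemD hfb)
          exact ⟨w', hw', r.trans r'⟩
      · have hav : ∀ z ∈ (P hab).support, z ≠ v := fun z hz e => hvin (e ▸ hz)
        have hfa : f a ≠ v := hav _ (P hab).start_mem_support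
        have r := hwalkid (((P hab).takeUntil u husup).reverse)
          (fun z hz => hav z (by
            rw [SimpleGraph.Walk.support_reverse, List.mem_reverse] at hz
            exact SimpleGraph.Walk.support_takeUntil_subset _ _ hz)) hm (hmemD hfa)
        obtain ⟨w', hw', r'⟩ := hescape a hfa (hmemD hfa)
        exact ⟨w', hw', r.trans r'⟩
  rintro ⟨u1, hm1⟩ ⟨u2, hm2⟩
  have hu1 : u1 ≠ v := by simpa [hDvdef] using hm1
  have hu2 : u2 ≠ v := by simpa [hDvdef] using hm2
  obtain ⟨w1, hw1, r1⟩ := hrep u1 hu1 hm1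
  obtain ⟨w2, hw2, r2⟩ := hrep u2 hu2 hm2
  exact (r1.trans (hbranch w1 w2 hw1 hw2 _ _)).trans r2.symm

end Top3

section NoXY
variable {U : Type u} {Γ : SimpleGraph U}

lemma path_ne_of_pos {a b : U} {p : Γ.Walk a b} (hp : p.IsPath) (hl : 0 < p.length) :
    a ≠ b := by
  intro e
  subst e
  cases p with
  | nil => simp at hl
  | cons h q =>
    exact ((SimpleGraph.Walk.cons_isPath_iff h q).1 hp).2 q.end_mem_support

lemma no_xy_edge {x y : U} {T : Γ.Walk x y} (hp : T.IsPath) {t : U} (ht : t ∈ T.support)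
    (htx : t ≠ x) (hty : t ≠ y) : s(x, y) ∉ T.edges := by
  cases T with
  | nil => simp
  | @cons _ b _ h q =>
    intro he
    rw [SimpleGraph.Walk.edges_cons, List.mem_cons] at he
    rcases he with he | he
    · rw [Sym2.eq_iff] at he
      rcases he with ⟨-, e2⟩ | ⟨e1, -⟩
      · subst e2
        cases q with
        | nil => simp [SimpleGraph.Walk.support_cons] at ht; tauto
        | cons h' q' =>
          have hq : (SimpleGraph.Walk.cons h' q').IsPath :=
            ((SimpleGraph.Walk.cons_isPath_iff h _).1 hp).1
          exact ((SimpleGraph.Walk.cons_isPath_iff h' q').1 hq).2 q'.end_mem_support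
      · exact h.ne e1
    · exact ((SimpleGraph.Walk.cons_isPath_iff h q).1 hp).2
        (q.fst_mem_support_of_mem_edges he)
end NoXY

/-- A non-separating cycle of `G − (T)` of which `T` is not a path-chord is a
non-separating cycle of `G`. -/
theorem stmt16 {V : Type} [Fintype V] (G : SimpleGraph V) (hG : TopThreeConnected G)
    {x y : V} (T : G.Walk x y) (hT : IsThread T)
    (hG' : TopThreeConnected (G.induce (threadInternal T)ᶜ))
    (Q : G.Subgraph) (hQv : Q.verts ⊆ (threadInternal T)ᶜ)
    (hQcyc : IsCycleSub (restrictSub G (threadInternal T)ᶜ Q hQv))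
    (hQns : numBlocks (contractSG (G.induce (threadInternal T)ᶜ)
        (restrictSub G (threadInternal T)ᶜ Q hQv).edgeSet) ≤
        numBlocks (G.induce (threadInternal T)ᶜ))
    (hnpc : ¬ (Q.verts ∩ T.toSubgraph.verts = {x, y} ∧
        Q.edgeSet ∩ T.toSubgraph.edgeSet = ∅)) :
    IsCycleSub Q ∧ numBlocks (contractSG G Q.edgeSet) ≤ numBlocks G := by
  classical
  obtain ⟨hTpath, hTlen, -, -⟩ := hT
  have hxy : x ≠ y := path_ne_of_pos hTpath hTlen
  have hxS : x ∈ (threadInternal T)ᶜ := fun h => h.2.1 rfl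
  have hyS : y ∈ (threadInternal T)ᶜ := fun h => h.2.2 rfl
  -- Part 1: Q is a cycle of G
  have hQconn : Q.Connected := by
    refine ⟨SimpleGraph.Connected.map (G := (restrictSub G (threadInternal T)ᶜ Q hQv).coe)
      ⟨fun u => ⟨((u : ↥(threadInternal T)ᶜ) : V), u.2⟩, fun {a b} hab => hab⟩ ?_ hQcyc.1.coe⟩
    rintro ⟨v, hv⟩
    exact ⟨⟨⟨v, hQv hv⟩, hv⟩, rfl⟩
  have hQdeg : ∀ v ∈ Q.verts, (Q.neighborSet v).ncard = 2 := by
    intro v hv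
    have h2 := hQcyc.2 ⟨v, hQv hv⟩ hv
    have himg : Q.neighborSet v =
        Subtype.val '' ((restrictSub G (threadInternal T)ᶜ Q hQv).neighborSet ⟨v, hQv hv⟩) := by
      ext w
      constructor
      · intro hw
        exact ⟨⟨w, hQv hw.snd_mem⟩, hw, rfl⟩
      · rintro ⟨w', hw', rfl⟩
        exact hw'
    rw [himg, Set.ncard_image_of_injective _ Subtype.val_injective]
    exact h2
  refine ⟨⟨hQconn, hQdeg⟩, ?_⟩
  -- Part 2: non-separating
  have hQvne : Q.verts.Nonempty := (SimpleGraph.Subgraph.connected_iff.1 hQconn).2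
  obtain ⟨q0, hq0⟩ := hQvne
  haveI hVne : Nonempty V := ⟨q0⟩
  -- component machinery
  have hKadj : ∀ {a b : V}, (SimpleGraph.fromEdgeSet Q.edgeSet).Adj a b ↔ Q.Adj a b := by
    intro a b
    rw [SimpleGraph.fromEdgeSet_adj]
    exact ⟨fun h => SimpleGraph.Subgraph.mem_edgeSet.1 h.1,
      fun h => ⟨SimpleGraph.Subgraph.mem_edgeSet.2 h, (Q.adj_sub h).ne⟩⟩
  have hsing : ∀ a b : V, a ∉ Q.verts →
      (SimpleGraph.fromEdgeSet Q.edgeSet).connectedComponentMk a =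
      (SimpleGraph.fromEdgeSet Q.edgeSet).connectedComponentMk b → a = b := by
    intro a b ha he
    obtain ⟨p⟩ := SimpleGraph.ConnectedComponent.eq.1 he
    cases p with
    | nil => rfl
    | cons h q => exact absurd (Q.edge_vert (hKadj.1 h)) ha
  have hmQ : ∀ a b : V, a ∈ Q.verts → b ∈ Q.verts →
      (SimpleGraph.fromEdgeSet Q.edgeSet).connectedComponentMk a =
      (SimpleGraph.fromEdgeSet Q.edgeSet).connectedComponentMk b := by
    intro a b ha hb
    refine SimpleGraph.ConnectedComponent.eq.2 ?_
    have hr := hQconn.coe.preconnected ⟨a, ha⟩ ⟨b, hb⟩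
    exact SimpleGraph.Reachable.map
      (⟨fun u => (u : V), fun {u w} h => hKadj.2 h⟩ :
        Q.coe →g SimpleGraph.fromEdgeSet Q.edgeSet) hr
  have hK'adj : ∀ a b : ↥(threadInternal T)ᶜ,
      (SimpleGraph.fromEdgeSet (restrictSub G (threadInternal T)ᶜ Q hQv).edgeSet).Adj a b ↔
        Q.Adj ↑a ↑b := by
    intro a b
    rw [SimpleGraph.fromEdgeSet_adj]
    constructor
    · intro h
      exact SimpleGraph.Subgraph.mem_edgeSet.1 h.1
    · intro h
      refine ⟨SimpleGraph.Subgraph.mem_edgeSet.2 h, ?_⟩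
      intro e
      exact (Q.adj_sub h).ne (congrArg Subtype.val e)
  have hK_lift : ∀ {u w : V} (p : (SimpleGraph.fromEdgeSet Q.edgeSet).Walk u w)
      (hu : u ∈ (threadInternal T)ᶜ) (hw : w ∈ (threadInternal T)ᶜ),
      (SimpleGraph.fromEdgeSet (restrictSub G (threadInternal T)ᶜ Q hQv).edgeSet).Reachable
        ⟨u, hu⟩ ⟨w, hw⟩ := by
    intro u w p
    induction p with
    | nil => intro hu hw; exact SimpleGraph.Reachable.refl _
    | @cons a c b h q ih =>
      intro hu hw
      have hcQ : c ∈ Q.verts := (hKadj.1 h).snd_mem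
      have hc : c ∈ (threadInternal T)ᶜ := hQv hcQ
      exact (SimpleGraph.Adj.reachable ((hK'adj ⟨a, hu⟩ ⟨c, hc⟩).2 (hKadj.1 h))).trans (ih hc hw)
  -- the embedding of components
  set χ : (SimpleGraph.fromEdgeSet
        (restrictSub G (threadInternal T)ᶜ Q hQv).edgeSet).ConnectedComponent →
      (SimpleGraph.fromEdgeSet Q.edgeSet).ConnectedComponent :=
    SimpleGraph.ConnectedComponent.map
      (⟨fun u => (u : V), fun {a b} h => hKadj.2 ((hK'adj a b).1 h)⟩ :
        SimpleGraph.fromEdgeSet (restrictSub G (threadInternal T)ᶜ Q hQv).edgeSet →g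
          SimpleGraph.fromEdgeSet Q.edgeSet) with hχdef
  have hχmk : ∀ a : ↥(threadInternal T)ᶜ,
      χ ((SimpleGraph.fromEdgeSet
        (restrictSub G (threadInternal T)ᶜ Q hQv).edgeSet).connectedComponentMk a) =
      (SimpleGraph.fromEdgeSet Q.edgeSet).connectedComponentMk ↑a := by
    intro a
    rw [hχdef]
    exact SimpleGraph.ConnectedComponent.map_mk _ _
  have hχinj : Function.Injective χ := by
    have hbase : ∀ (a b : ↥(threadInternal T)ᶜ),
        χ ((SimpleGraph.fromEdgeSet
          (restrictSub G (threadInternal T)ᶜ Q hQv).edgeSet).connectedComponentMk a) =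
        χ ((SimpleGraph.fromEdgeSet
          (restrictSub G (threadInternal T)ᶜ Q hQv).edgeSet).connectedComponentMk b) →
        (SimpleGraph.fromEdgeSet
          (restrictSub G (threadInternal T)ᶜ Q hQv).edgeSet).connectedComponentMk a =
        (SimpleGraph.fromEdgeSet
          (restrictSub G (threadInternal T)ᶜ Q hQv).edgeSet).connectedComponentMk b := by
      intro a b h
      rw [hχmk, hχmk] at h
      obtain ⟨p⟩ := SimpleGraph.ConnectedComponent.eq.1 h
      exact SimpleGraph.ConnectedComponent.eq.2 (hK_lift p a.2 b.2)
    intro c d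
    induction c using SimpleGraph.ConnectedComponent.ind with
    | _ a =>
      induction d using SimpleGraph.ConnectedComponent.ind with
      | _ b => exact hbase a b
  -- image of the components of the reduced graph
  set A : Set ((SimpleGraph.fromEdgeSet Q.edgeSet).ConnectedComponent) :=
    Set.range (fun a : ↥(threadInternal T)ᶜ =>
      (SimpleGraph.fromEdgeSet Q.edgeSet).connectedComponentMk ↑a) with hAdef
  have hχrange : ∀ c', χ c' ∈ A := by
    intro c'
    induction c' using SimpleGraph.ConnectedComponent.ind with
    | _ a => exact ⟨a, (hχmk a).symm⟩
  have hχadj : ∀ c' d',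
      (contractSG (G.induce (threadInternal T)ᶜ)
        (restrictSub G (threadInternal T)ᶜ Q hQv).edgeSet).Adj c' d' →
      (contractSG G Q.edgeSet).Adj (χ c') (χ d') := by
    rintro c' d' ⟨hne, a, b, hab, ha, hb⟩
    refine ⟨fun e => hne (hχinj e), ↑a, ↑b, hab, ?_, ?_⟩
    · rw [← ha, hχmk]
    · rw [← hb, hχmk]
  have hGadjH : ∀ a b : V, G.Adj a b →
      (SimpleGraph.fromEdgeSet Q.edgeSet).connectedComponentMk a =
        (SimpleGraph.fromEdgeSet Q.edgeSet).connectedComponentMk b ∨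
      (contractSG G Q.edgeSet).Adj
        ((SimpleGraph.fromEdgeSet Q.edgeSet).connectedComponentMk a)
        ((SimpleGraph.fromEdgeSet Q.edgeSet).connectedComponentMk b) := by
    intro a b h
    by_cases e : (SimpleGraph.fromEdgeSet Q.edgeSet).connectedComponentMk a =
        (SimpleGraph.fromEdgeSet Q.edgeSet).connectedComponentMk b
    · exact Or.inl e
    · exact Or.inr ⟨e, a, b, h, rfl, rfl⟩
  -- goodness of the contracted reduced graph
  haveI hSne : Nonempty ↥(threadInternal T)ᶜ := ⟨⟨q0, hQv hq0⟩⟩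
  haveI : Nonempty (SimpleGraph.fromEdgeSet
      (restrictSub G (threadInternal T)ᶜ Q hQv).edgeSet).ConnectedComponent :=
    ⟨(SimpleGraph.fromEdgeSet
      (restrictSub G (threadInternal T)ᶜ Q hQv).edgeSet).connectedComponentMk
        (Classical.arbitrary _)⟩
  have hH'good : GoodBlockSet (contractSG (G.induce (threadInternal T)ᶜ)
      (restrictSub G (threadInternal T)ᶜ Q hQv).edgeSet) Set.univ := by
    refine good_univ_of_numBlocks_le_one _ (le_trans hQns ?_)
    rw [numBlocks_eq_one _ (top3_good hG')]
  -- `x` and `y` are in distinct components if there is an internal vertex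
  have hmxy : (threadInternal T).Nonempty →
      (SimpleGraph.fromEdgeSet Q.edgeSet).connectedComponentMk x ≠
      (SimpleGraph.fromEdgeSet Q.edgeSet).connectedComponentMk y := by
    intro ⟨t, htint⟩ he
    have hor : x ∉ Q.verts ∨ y ∉ Q.verts := by
      by_contra hno
      push_neg at hno
      refine hnpc ⟨?_, ?_⟩
      · ext v
        simp only [Set.mem_inter_iff, SimpleGraph.Walk.verts_toSubgraph, Set.mem_setOf_eq,
          Set.mem_insert_iff, Set.mem_singleton_iff]
        constructor
        · rintro ⟨hvQ, hvsup⟩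
          by_cases hvx : v = x
          · exact Or.inl hvx
          · by_cases hvy : v = y
            · exact Or.inr hvy
            · exact absurd ⟨hvsup, hvx, hvy⟩ (hQv hvQ)
        · rintro (rfl | rfl)
          · exact ⟨hno.1, T.start_mem_support⟩
          · exact ⟨hno.2, T.end_mem_support⟩
      · ext e
        simp only [Set.mem_inter_iff, Set.mem_empty_iff_false, iff_false, not_and]
        induction e using Sym2.ind with
        | _ u w =>
          intro heQ heT
          have hQuw : Q.Adj u w := SimpleGraph.Subgraph.mem_edgeSet.1 heQ
          have hTuw : s(u, w) ∈ T.edges := by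
            have := heT
            rwa [SimpleGraph.Walk.mem_edges_toSubgraph] at this
          have husup : u ∈ T.support := T.fst_mem_support_of_mem_edges hTuw
          have hwsup : w ∈ T.support := T.snd_mem_support_of_mem_edges hTuw
          have hcl : ∀ z ∈ T.support, z ∈ Q.verts → z = x ∨ z = y := by
            intro z hz hzQ
            by_cases hzx : z = x
            · exact Or.inl hzx
            · by_cases hzy : z = y
              · exact Or.inr hzy
              · exact absurd ⟨hz, hzx, hzy⟩ (hQv hzQ)
          have hxyedge : s(x, y) ∈ T.edges := by
            rcases hcl u husup hQuw.fst_mem with rfl | rfl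
            · rcases hcl w hwsup hQuw.snd_mem with rfl | rfl
              · exact absurd rfl hQuw.ne
              · exact hTuw
            · rcases hcl w hwsup hQuw.snd_mem with rfl | rfl
              · rw [Sym2.eq_swap] at hTuw; exact hTuw
              · exact absurd rfl hQuw.ne
          exact no_xy_edge hTpath htint.1 htint.2.1 htint.2.2 hxyedge
    rcases hor with h | h
    · exact hxy (hsing x y h he)
    · exact hxy.symm (hsing y x h he.symm)
  -- every vertex of the thread is classified
  have hclassify : ∀ u ∈ T.support, u = x ∨ u = y ∨ u ∈ threadInternal T := by
    intro u hu
    by_cases hux : u = x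
    · exact Or.inl hux
    · by_cases huy : u = y
      · exact Or.inr (Or.inl huy)
      · exact Or.inr (Or.inr ⟨hu, hux, huy⟩)
  have hrep_exists : ∀ c : (SimpleGraph.fromEdgeSet Q.edgeSet).ConnectedComponent, ∃ a : V, (SimpleGraph.fromEdgeSet Q.edgeSet).connectedComponentMk a = c := fun c =>
    SimpleGraph.ConnectedComponent.ind (fun v => ⟨v, rfl⟩) c
  -- mutual reachability of image components, avoiding a deleted component
  have hP1 : ∀ (c0 : (SimpleGraph.fromEdgeSet Q.edgeSet).ConnectedComponent)
      (c' d' : (SimpleGraph.fromEdgeSet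
        (restrictSub G (threadInternal T)ᶜ Q hQv).edgeSet).ConnectedComponent)
      (hc : χ c' ≠ c0) (hd : χ d' ≠ c0),
      ((contractSG G Q.edgeSet).induce (Set.univ \ {c0})).Reachable
        ⟨χ c', ⟨trivial, hc⟩⟩ ⟨χ d', ⟨trivial, hd⟩⟩ := by
    intro c0 c' d' hc hd
    by_cases hpre : ∃ v0, χ v0 = c0
    · obtain ⟨v0, hv0⟩ := hpre
      have hc' : c' ∈ Set.univ \ {v0} := ⟨trivial, fun e => hc (by rw [e, hv0])⟩
      have hd' : d' ∈ Set.univ \ {v0} := ⟨trivial, fun e => hd (by rw [e, hv0])⟩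
      obtain ⟨p⟩ := hH'good.2.2 v0 ⟨c', hc'⟩ ⟨d', hd'⟩
      exact reach_of_walk' (Γ := (contractSG (G.induce (threadInternal T)ᶜ) (restrictSub G (threadInternal T)ᶜ Q hQv).edgeSet).induce (Set.univ \ {v0}))
        (Γ' := (contractSG G Q.edgeSet).induce (Set.univ \ {c0}))
        (φ := fun e => ⟨χ ↑e, ⟨trivial, fun he => e.2.2 (hχinj (by rw [he, hv0]))⟩⟩)
        (fun e1 e2 h12 => SimpleGraph.Adj.reachable (hχadj _ _ h12)) p
    · obtain ⟨p⟩ := hH'good.2.1.preconnected ⟨c', trivial⟩ ⟨d', trivial⟩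
      exact reach_of_walk' (Γ := (contractSG (G.induce (threadInternal T)ᶜ) (restrictSub G (threadInternal T)ᶜ Q hQv).edgeSet).induce Set.univ)
        (Γ' := (contractSG G Q.edgeSet).induce (Set.univ \ {c0}))
        (φ := fun e => ⟨χ ↑e, ⟨trivial, fun he => hpre ⟨↑e, he⟩⟩⟩)
        (fun e1 e2 h12 => SimpleGraph.Adj.reachable (hχadj _ _ h12)) p
  -- every component distinct from the deleted one reaches an image component
  have hrepA : ∀ (c0 : (SimpleGraph.fromEdgeSet Q.edgeSet).ConnectedComponent) (a : V) (ha : (SimpleGraph.fromEdgeSet Q.edgeSet).connectedComponentMk a ≠ c0),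
      ∃ e : ↥(threadInternal T)ᶜ, ∃ (hene : (SimpleGraph.fromEdgeSet Q.edgeSet).connectedComponentMk ↑e ≠ c0),
        ((contractSG G Q.edgeSet).induce (Set.univ \ {c0})).Reachable
          ⟨(SimpleGraph.fromEdgeSet Q.edgeSet).connectedComponentMk a, ⟨trivial, ha⟩⟩ ⟨(SimpleGraph.fromEdgeSet Q.edgeSet).connectedComponentMk ↑e, ⟨trivial, hene⟩⟩ := by
    intro c0 a ha
    by_cases haS : a ∈ (threadInternal T)ᶜ
    · exact ⟨⟨a, haS⟩, ha, SimpleGraph.Reachable.refl _⟩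
    · have haint : a ∈ threadInternal T := not_not.1 haS
      obtain ⟨hasup, hax, hay⟩ := haint
      have hIne : (threadInternal T).Nonempty := ⟨a, hasup, hax, hay⟩
      have hmxy' := hmxy hIne
      have hintQ : ∀ u, u ∈ threadInternal T → u ∉ Q.verts :=
        fun u hu hQu => (hQv hQu) hu
      by_cases hc0x : (SimpleGraph.fromEdgeSet Q.edgeSet).connectedComponentMk x = c0
      · -- walk from a to y avoiding x
        have hxavoid : x ∉ (T.dropUntil a hasup).support := avoid_drop hTpath hasup hax
        have hsupcond : ∀ u ∈ (T.dropUntil a hasup).support, (SimpleGraph.fromEdgeSet Q.edgeSet).connectedComponentMk u ∈ Set.univ \ {c0} := by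
          intro u hu
          refine ⟨trivial, fun he => ?_⟩
          have husup : u ∈ T.support := T.support_dropUntil_subset hasup hu
          have hux : u ≠ x := fun e => hxavoid (e ▸ hu)
          rcases hclassify u husup with rfl | rfl | huint
          · exact hux rfl
          · exact hmxy' (hc0x.trans he.symm)
          · exact hux (hsing u x (hintQ u huint) (he.trans hc0x.symm))
        have hyne : (SimpleGraph.fromEdgeSet Q.edgeSet).connectedComponentMk y ≠ c0 :=
          fun e => (hsupcond y (T.dropUntil a hasup).end_mem_support).2 e
        exact ⟨⟨y, hyS⟩, hyne,
          reach_of_walk hGadjH (T.dropUntil a hasup) hsupcond ⟨trivial, ha⟩ ⟨trivial, hyne⟩⟩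
      · by_cases hc0t : ∃ t', t' ∈ threadInternal T ∧ (SimpleGraph.fromEdgeSet Q.edgeSet).connectedComponentMk t' = c0
        · obtain ⟨t', ht'int, ht'c0⟩ := hc0t
          have ht'sup : t' ∈ T.support := ht'int.1
          have hat' : a ≠ t' := fun e => ha (e ▸ ht'c0)
          have ht'Q : t' ∉ Q.verts := hintQ t' ht'int
          rcases mem_take_or_drop T hasup ht'sup with hside | hside
          · -- a is on the x-side; walk to x avoiding t'
            have ht'avoid : t' ∉ ((T.takeUntil t' ht'sup).takeUntil a hside).support :=
              avoid_take (hTpath.takeUntil ht'sup) hside hat'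
            have hsupcond : ∀ u ∈ ((T.takeUntil t' ht'sup).takeUntil a hside).reverse.support,
                (SimpleGraph.fromEdgeSet Q.edgeSet).connectedComponentMk u ∈ Set.univ \ {c0} := by
              intro u hu
              rw [SimpleGraph.Walk.support_reverse, List.mem_reverse] at hu
              refine ⟨trivial, fun he => ?_⟩
              have : t' = u := hsing t' u ht'Q (ht'c0.trans he.symm)
              exact ht'avoid (this ▸ hu)
            have hxne : (SimpleGraph.fromEdgeSet Q.edgeSet).connectedComponentMk x ≠ c0 := hc0x
            exact ⟨⟨x, hxS⟩, hxne,
              reach_of_walk hGadjH (((T.takeUntil t' ht'sup).takeUntil a hside).reverse)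
                hsupcond ⟨trivial, ha⟩ ⟨trivial, hxne⟩⟩
          · -- a is on the y-side; walk to y avoiding t'
            have ht'avoid : t' ∉ ((T.dropUntil t' ht'sup).dropUntil a hside).support :=
              avoid_drop (hTpath.dropUntil ht'sup) hside hat'
            have hsupcond : ∀ u ∈ ((T.dropUntil t' ht'sup).dropUntil a hside).support,
                (SimpleGraph.fromEdgeSet Q.edgeSet).connectedComponentMk u ∈ Set.univ \ {c0} := by
              intro u hu
              refine ⟨trivial, fun he => ?_⟩
              have : t' = u := hsing t' u ht'Q (ht'c0.trans he.symm)
              exact ht'avoid (this ▸ hu)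
            have hyne : (SimpleGraph.fromEdgeSet Q.edgeSet).connectedComponentMk y ≠ c0 :=
              fun e => (hsupcond y (SimpleGraph.Walk.end_mem_support _)).2 e
            exact ⟨⟨y, hyS⟩, hyne,
              reach_of_walk hGadjH ((T.dropUntil t' ht'sup).dropUntil a hside)
                hsupcond ⟨trivial, ha⟩ ⟨trivial, hyne⟩⟩
        · -- no obstruction towards x
          have hyavoid : y ∉ (T.takeUntil a hasup).support := avoid_take hTpath hasup hay
          have hsupcond : ∀ u ∈ (T.takeUntil a hasup).reverse.support,
              (SimpleGraph.fromEdgeSet Q.edgeSet).connectedComponentMk u ∈ Set.univ \ {c0} := by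
            intro u hu
            rw [SimpleGraph.Walk.support_reverse, List.mem_reverse] at hu
            refine ⟨trivial, fun he => ?_⟩
            have husup : u ∈ T.support := T.support_takeUntil_subset hasup hu
            rcases hclassify u husup with rfl | rfl | huint
            · exact hc0x he
            · exact hyavoid hu
            · exact hc0t ⟨u, huint, he⟩
          have hxne : (SimpleGraph.fromEdgeSet Q.edgeSet).connectedComponentMk x ≠ c0 := hc0x
          exact ⟨⟨x, hxS⟩, hxne,
            reach_of_walk hGadjH ((T.takeUntil a hasup).reverse)
              hsupcond ⟨trivial, ha⟩ ⟨trivial, hxne⟩⟩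
  -- the contracted graph is good
  haveI : Nonempty (SimpleGraph.fromEdgeSet Q.edgeSet).ConnectedComponent := ⟨(SimpleGraph.fromEdgeSet Q.edgeSet).connectedComponentMk q0⟩
  have hHgood : GoodBlockSet (contractSG G Q.edgeSet) Set.univ := by
    refine ⟨Set.univ_nonempty, ?_, ?_⟩
    · -- connectivity
      haveI : Nonempty ↥(Set.univ : Set (SimpleGraph.fromEdgeSet Q.edgeSet).ConnectedComponent) := ⟨⟨(SimpleGraph.fromEdgeSet Q.edgeSet).connectedComponentMk q0, trivial⟩⟩
      have hto : ∀ a : V, ((contractSG G Q.edgeSet).induce (Set.univ : Set (SimpleGraph.fromEdgeSet Q.edgeSet).ConnectedComponent)).Reachable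
          ⟨(SimpleGraph.fromEdgeSet Q.edgeSet).connectedComponentMk a, trivial⟩ ⟨(SimpleGraph.fromEdgeSet Q.edgeSet).connectedComponentMk x, trivial⟩ := by
        intro a
        by_cases haS : a ∈ (threadInternal T)ᶜ
        · obtain ⟨p⟩ := hH'good.2.1.preconnected ⟨(SimpleGraph.fromEdgeSet (restrictSub G (threadInternal T)ᶜ Q hQv).edgeSet).connectedComponentMk ⟨a, haS⟩, trivial⟩
            ⟨(SimpleGraph.fromEdgeSet (restrictSub G (threadInternal T)ᶜ Q hQv).edgeSet).connectedComponentMk ⟨x, hxS⟩, trivial⟩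
          have r := reach_of_walk' (Γ := (contractSG (G.induce (threadInternal T)ᶜ) (restrictSub G (threadInternal T)ᶜ Q hQv).edgeSet).induce Set.univ)
            (Γ' := (contractSG G Q.edgeSet).induce (Set.univ : Set (SimpleGraph.fromEdgeSet Q.edgeSet).ConnectedComponent))
            (φ := fun e => ⟨χ ↑e, trivial⟩)
            (fun e1 e2 h12 => SimpleGraph.Adj.reachable (hχadj _ _ h12)) p
          have e1 : (⟨(SimpleGraph.fromEdgeSet Q.edgeSet).connectedComponentMk a, trivial⟩ : ↥(Set.univ : Set (SimpleGraph.fromEdgeSet Q.edgeSet).ConnectedComponent)) =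
              ⟨χ ((SimpleGraph.fromEdgeSet (restrictSub G (threadInternal T)ᶜ Q hQv).edgeSet).connectedComponentMk ⟨a, haS⟩), trivial⟩ := Subtype.ext (hχmk ⟨a, haS⟩).symm
          have e2 : (⟨(SimpleGraph.fromEdgeSet Q.edgeSet).connectedComponentMk x, trivial⟩ : ↥(Set.univ : Set (SimpleGraph.fromEdgeSet Q.edgeSet).ConnectedComponent)) =
              ⟨χ ((SimpleGraph.fromEdgeSet (restrictSub G (threadInternal T)ᶜ Q hQv).edgeSet).connectedComponentMk ⟨x, hxS⟩), trivial⟩ := Subtype.ext (hχmk ⟨x, hxS⟩).symm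
          rw [e1, e2]
          exact r
        · have haint : a ∈ threadInternal T := not_not.1 haS
          exact reach_of_walk (D := Set.univ) hGadjH ((T.takeUntil a haint.1).reverse)
            (fun u _ => Set.mem_univ _) (Set.mem_univ _) (Set.mem_univ _)
      refine SimpleGraph.Connected.mk ?_
      rintro ⟨c, hc⟩ ⟨d, hd⟩
      obtain ⟨a, rfl⟩ := hrep_exists c
      obtain ⟨b, rfl⟩ := hrep_exists d
      exact (hto a).trans (hto b).symm
    · -- no cutvertex
      intro c0
      rintro ⟨c, hc⟩ ⟨d, hd⟩
      obtain ⟨a, rfl⟩ := hrep_exists c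
      obtain ⟨b, rfl⟩ := hrep_exists d
      have ha : (SimpleGraph.fromEdgeSet Q.edgeSet).connectedComponentMk a ≠ c0 := fun e => hc.2 e
      have hb : (SimpleGraph.fromEdgeSet Q.edgeSet).connectedComponentMk b ≠ c0 := fun e => hd.2 e
      obtain ⟨e1, he1, r1⟩ := hrepA c0 a ha
      obtain ⟨e2, he2, r2⟩ := hrepA c0 b hb
      have hmid := hP1 c0 ((SimpleGraph.fromEdgeSet (restrictSub G (threadInternal T)ᶜ Q hQv).edgeSet).connectedComponentMk e1) ((SimpleGraph.fromEdgeSet (restrictSub G (threadInternal T)ᶜ Q hQv).edgeSet).connectedComponentMk e2)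
        (by rw [hχmk]; exact he1) (by rw [hχmk]; exact he2)
      have ee1 : (⟨χ ((SimpleGraph.fromEdgeSet (restrictSub G (threadInternal T)ᶜ Q hQv).edgeSet).connectedComponentMk e1), ⟨trivial, by rw [hχmk]; exact he1⟩⟩ :
          ↥(Set.univ \ {c0})) = ⟨(SimpleGraph.fromEdgeSet Q.edgeSet).connectedComponentMk ↑e1, ⟨trivial, he1⟩⟩ := Subtype.ext (hχmk e1)
      have ee2 : (⟨χ ((SimpleGraph.fromEdgeSet (restrictSub G (threadInternal T)ᶜ Q hQv).edgeSet).connectedComponentMk e2), ⟨trivial, by rw [hχmk]; exact he2⟩⟩ :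
          ↥(Set.univ \ {c0})) = ⟨(SimpleGraph.fromEdgeSet Q.edgeSet).connectedComponentMk ↑e2, ⟨trivial, he2⟩⟩ := Subtype.ext (hχmk e2)
      rw [ee1, ee2] at hmid
      exact (r1.trans hmid).trans r2.symm
  calc numBlocks (contractSG G Q.edgeSet) = 1 := numBlocks_eq_one _ hHgood
  _ ≤ numBlocks G := one_le_numBlocks G
end
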